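/- arXiv:2002.11775 — 2 statements merged into one kernel-verified Lean document; each statement's English description precedes it below -/
import Mathlib

section
/- Let u ∈ U, τ ∈ (0,1), v ∈ B(0,ρ_max), and let u^ε be the perturbed control equal to v on (τ−ε, τ] and to u elsewhere, with x₁ and x₁^ε the corresponding solutions on [0,1] of ẋ = f(x,·) starting at x₀. Then the state variation Ψ₁(t) := lim_{ε→0⁺} (x₁^ε(t) − x₁(t))/ε uniquely exists for all t ∈ [τ, 1] and satisfies the linear variational ODE Ψ̇₁(t) = (∂f/∂x)(x₁(t), u(t)) Ψ₁(t) with initial condition Ψ₁(τ) = f(x₁(τ), v) − f(x₁(τ), u(τ)). -/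
open Set MeasureTheory Filter Topology

noncomputable section

open scoped Classical

abbrev EucSp (n : ℕ) := EuclideanSpace ℝ (Fin n)

/-- A function is piecewise continuous on `s` if it is continuous within `s` outside of a
finite set of points. -/
def PiecewiseContinuousOn {E : Type*} [TopologicalSpace E] (u : ℝ → E) (s : Set ℝ) : Prop :=
  ∃ D : Finset ℝ, ∀ t ∈ s, t ∉ D → ContinuousWithinAt u s t

/-- Admissible controls: piecewise continuous functions on `[0, T]` with values in the
closed ball of radius `ρmax`. -/
def AdmissibleCtrl {m : ℕ} (T ρmax : ℝ) (u : ℝ → EucSp m) : Prop :=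
  PiecewiseContinuousOn u (Set.Icc 0 T) ∧ ∀ t ∈ Set.Icc (0 : ℝ) T, ‖u t‖ ≤ ρmax

/-- `x` is a (Carathéodory) solution of `ẋ = f(x, u(t))` on `[a, b]`, in integral form. -/
def IsSolOn {nx m : ℕ} (f : EucSp nx → EucSp m → EucSp nx) (u : ℝ → EucSp m)
    (a b : ℝ) (x : ℝ → EucSp nx) : Prop :=
  ContinuousOn x (Set.Icc a b) ∧
    ∀ t ∈ Set.Icc a b, x t = x a + ∫ s in a..t, f (x s) (u s)

/-- The modes `x i : [i-1, i] → ℝ^{n_x}` of the hybrid system with time-driven switching: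
`x 1 0 = x₀`, each mode solves `ẋ = f(x, u)` on `[i-1, i]`, and modes are linked by the jump
map `g` with observation `y i`. -/
def HybridModes {nx ny m : ℕ} (T : ℕ) (f : EucSp nx → EucSp m → EucSp nx)
    (g : EucSp nx → EucSp ny → EucSp nx) (u : ℝ → EucSp m) (y : ℕ → EucSp ny)
    (x₀ : EucSp nx) (x : ℕ → ℝ → EucSp nx) : Prop :=
  x 1 0 = x₀ ∧
    (∀ i : ℕ, 1 ≤ i → i ≤ T → IsSolOn f u ((i : ℝ) - 1) (i : ℝ) (x i)) ∧
    (∀ i : ℕ, 1 ≤ i → i + 1 ≤ T → x (i + 1) (i : ℝ) = g (x i (i : ℝ)) (y i))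

/-- The hybrid trajectory `X` built from the modes: `X t = x i t` on `[i-1, i)` and
`X T = g (x T T) (y T)`. -/
def IsHybridTraj {nx ny : ℕ} (T : ℕ) (g : EucSp nx → EucSp ny → EucSp nx)
    (y : ℕ → EucSp ny) (x : ℕ → ℝ → EucSp nx) (X : ℝ → EucSp nx) : Prop :=
  (∀ i : ℕ, 1 ≤ i → i ≤ T → ∀ t ∈ Set.Ico ((i : ℝ) - 1) (i : ℝ), X t = x i t) ∧
    X (T : ℝ) = g (x T (T : ℝ)) (y T)

/-- The perturbed control: equal to `v` on `(τ - ε, τ]` and to `u` elsewhere. -/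
def perturb {m : ℕ} (u : ℝ → EucSp m) (τ : ℝ) (v : EucSp m) (ε : ℝ) : ℝ → EucSp m :=
  fun t => if τ - ε < t ∧ t ≤ τ then v else u t

section AuxLemmas

lemma pc_intervalIntegrable {E : Type*} [NormedAddCommGroup E]
    {a b C : ℝ} (hab : a ≤ b) {h : ℝ → E} (D : Finset ℝ)
    (hcont : ∀ t ∈ Set.Icc a b, t ∉ D → ContinuousWithinAt h (Set.Icc a b) t)
    (hbound : ∀ t ∈ Set.Icc a b, ‖h t‖ ≤ C) :
    IntervalIntegrable h MeasureTheory.volume a b := by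
  have hS : ContinuousOn h (Set.Icc a b \ (D : Set ℝ)) := by
    intro t ht
    exact (hcont t ht.1 ht.2).mono diff_subset
  have hDnull : (MeasureTheory.volume : Measure ℝ) (D : Set ℝ) = 0 :=
    (D.finite_toSet).measure_zero _
  have hae : (Set.Icc a b : Set ℝ) =ᵐ[MeasureTheory.volume] (Set.Icc a b \ (D : Set ℝ)) := by
    refine (MeasureTheory.ae_eq_set.2 ⟨?_, ?_⟩)
    · refine MeasureTheory.measure_mono_null ?_ hDnull
      intro t ht
      rcases ht with ⟨h1, h2⟩
      by_contra hD
      exact h2 ⟨h1, hD⟩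
    · refine MeasureTheory.measure_mono_null ?_ hDnull
      intro t ht
      exact (ht.2 ht.1.1).elim
  have hmeas : MeasureTheory.AEStronglyMeasurable h
      (MeasureTheory.volume.restrict (Set.Icc a b)) := by
    rw [MeasureTheory.Measure.restrict_congr_set hae]
    exact hS.aestronglyMeasurable ((measurableSet_Icc).diff (D.finite_toSet.measurableSet))
  have hint : MeasureTheory.IntegrableOn h (Set.Icc a b) := by
    have hconst : MeasureTheory.IntegrableOn (fun _ : ℝ => C) (Set.Icc a b) :=
      MeasureTheory.integrableOn_const measure_Icc_lt_top.ne
    refine MeasureTheory.Integrable.mono' hconst hmeas ?_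
    exact (MeasureTheory.ae_restrict_mem measurableSet_Icc).mono hbound
  exact (intervalIntegrable_iff_integrableOn_Icc_of_le hab).2 hint

lemma pow_prim (a t : ℝ) (k : ℕ) :
    ∫ s in a..t, (s - a) ^ k = (t - a) ^ (k + 1) / (k + 1) := by
  rw [intervalIntegral.integral_comp_sub_right (fun s => s ^ k) a]
  simp [integral_pow]

/-- Grönwall inequality, integral form. -/
lemma gronwall_aux {a b K C : ℝ} (hK : 0 ≤ K) (hC : 0 ≤ C) {g : ℝ → ℝ}
    (hg : ContinuousOn g (Set.Icc a b))
    (hineq : ∀ t ∈ Set.Icc a b, g t ≤ C + K * ∫ s in a..t, g s) :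
    ∀ t ∈ Set.Icc a b, g t ≤ C * Real.exp (K * (t - a)) := by
  obtain ⟨M, hM⟩ : ∃ M, ∀ t ∈ Set.Icc a b, g t ≤ M := by
    obtain ⟨M, hM⟩ := (isCompact_Icc.image_of_continuousOn hg).bddAbove
    exact ⟨M, fun t ht => hM ⟨t, ht, rfl⟩⟩
  set M' := M ⊔ 0 with hM'
  have hM0 : 0 ≤ M' := le_max_right _ _
  have hMle : ∀ t ∈ Set.Icc a b, g t ≤ M' := fun t ht => (hM t ht).trans (le_max_left _ _)
  have cpoly : ∀ (c : ℝ) (k : ℕ), Continuous (fun s : ℝ => c * (s - a) ^ k) :=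
    fun c k => continuous_const.mul ((continuous_id.sub continuous_const).pow k)
  have key : ∀ n : ℕ, ∀ t ∈ Set.Icc a b,
      g t ≤ C * (∑ k ∈ Finset.range n, (K * (t - a)) ^ k / (Nat.factorial k)) +
        M' * (K * (t - a)) ^ n / (Nat.factorial n) := by
    intro n
    induction n with
    | zero => intro t ht; simpa using hMle t ht
    | succ n ih =>
      intro t ht
      have hta : 0 ≤ t - a := sub_nonneg.2 ht.1
      have hgint : IntervalIntegrable g MeasureTheory.volume a t :=
        (hg.mono (Set.Icc_subset_Icc le_rfl ht.2)).intervalIntegrable_of_Icc ht.1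
      set P : ℝ → ℝ := fun s =>
        (∑ k ∈ Finset.range n, (C * K ^ k / (Nat.factorial k)) * (s - a) ^ k) +
          (M' * K ^ n / (Nat.factorial n)) * (s - a) ^ n with hP
      have hPcont : Continuous P :=
        (continuous_finset_sum _ fun k _ => cpoly _ _).add (cpoly _ _)
      have e1 : ∀ s : ℝ, C * (∑ k ∈ Finset.range n,
          (K * (s - a)) ^ k / (Nat.factorial k)) + M' * (K * (s - a)) ^ n / (Nat.factorial n)
          = P s := by
        intro s
        rw [hP, Finset.mul_sum]
        congr 1
        · exact Finset.sum_congr rfl fun k _ => by rw [mul_pow]; ring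
        · rw [mul_pow]; ring
      have hmono : ∫ s in a..t, g s ≤ ∫ s in a..t, P s := by
        apply intervalIntegral.integral_mono_on ht.1 hgint
          (hPcont.intervalIntegrable _ _)
        intro s hs
        rw [← e1 s]
        exact ih s ⟨hs.1, hs.2.trans ht.2⟩
      have hcalc : ∫ s in a..t, P s
          = (∑ k ∈ Finset.range n, (C * K ^ k / (Nat.factorial k)) * ((t - a) ^ (k+1) / (k+1))) +
            (M' * K ^ n / (Nat.factorial n)) * ((t - a) ^ (n+1) / (n+1)) := by
        rw [hP]
        rw [intervalIntegral.integral_add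
          (((continuous_finset_sum _ fun k _ => cpoly _ _)).intervalIntegrable _ _)
          ((cpoly _ _).intervalIntegrable _ _)]
        rw [intervalIntegral.integral_finset_sum (fun k _ => (cpoly _ _).intervalIntegrable _ _)]
        congr 1
        · exact Finset.sum_congr rfl fun k _ => by
            rw [intervalIntegral.integral_const_mul, pow_prim]
        · rw [intervalIntegral.integral_const_mul, pow_prim]
      calc g t ≤ C + K * ∫ s in a..t, g s := hineq t ht
        _ ≤ C + K * ∫ s in a..t, P s := by
            exact add_le_add_right (mul_le_mul_of_nonneg_left hmono hK) C
        _ = C * (∑ k ∈ Finset.range (n+1), (K * (t - a)) ^ k / (Nat.factorial k)) +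
            M' * (K * (t - a)) ^ (n+1) / (Nat.factorial (n+1)) := by
            rw [hcalc]
            have hKS : ∀ k ∈ Finset.range n,
                K * ((C * K ^ k / (Nat.factorial k)) * ((t - a) ^ (k+1) / (k+1)))
                = C * ((K * (t - a)) ^ (k+1) / (Nat.factorial (k+1))) := by
              intro k _
              have h1 : ((k : ℝ) + 1) ≠ 0 := by positivity
              have h2 : ((Nat.factorial k : ℝ)) ≠ 0 := by positivity
              rw [mul_pow, Nat.factorial_succ]
              push_cast
              field_simp
              ring
            have hR : K * ((M' * K ^ n / (Nat.factorial n)) * ((t - a) ^ (n+1) / ((n : ℝ)+1)))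
                = M' * ((K * (t - a)) ^ (n+1) / (Nat.factorial (n+1))) := by
              have h1 : ((n : ℝ) + 1) ≠ 0 := by positivity
              have h2 : ((Nat.factorial n : ℝ)) ≠ 0 := by positivity
              rw [mul_pow, Nat.factorial_succ]
              push_cast
              field_simp
              ring
            have hRHS : C * (∑ k ∈ Finset.range (n+1), (K * (t - a)) ^ k / (Nat.factorial k))
                = (∑ k ∈ Finset.range n, C * ((K * (t - a)) ^ (k+1) / (Nat.factorial (k+1)))) + C := by
              rw [Finset.sum_range_succ', mul_add, Finset.mul_sum]
              simp
            rw [mul_add, Finset.mul_sum, Finset.sum_congr rfl hKS, hR, hRHS]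
            ring
  intro t ht
  have hta : 0 ≤ K * (t - a) := mul_nonneg hK (sub_nonneg.2 ht.1)
  have hsum : ∀ n : ℕ, C * (∑ k ∈ Finset.range n, (K * (t - a)) ^ k / (Nat.factorial k))
      ≤ C * Real.exp (K * (t - a)) := by
    intro n
    exact mul_le_mul_of_nonneg_left (Real.sum_le_exp_of_nonneg hta n) hC
  have hlim : Filter.Tendsto (fun n : ℕ => M' * (K * (t - a)) ^ n / (Nat.factorial n))
      Filter.atTop (nhds 0) := by
    have h2 := (FloorSemiring.tendsto_pow_div_factorial_atTop (K := ℝ) (K * (t - a))).const_mul M'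
    simpa [mul_div_assoc] using h2
  have hall : ∀ n : ℕ, g t ≤ C * Real.exp (K * (t - a)) + M' * (K * (t - a)) ^ n / (Nat.factorial n) :=
    fun n => (key n t ht).trans (add_le_add_left (hsum n) _)
  have hle := ge_of_tendsto (hlim.const_add (C * Real.exp (K * (t - a))))
    (Filter.Eventually.of_forall (fun n => by simpa using hall n))
  simpa using hle

variable {nx m : ℕ}

lemma hasFDerivAt_partial (f : EucSp nx → EucSp m → EucSp nx)
    (hf : ContDiff ℝ 1 fun p : EucSp nx × EucSp m => f p.1 p.2) (z : EucSp nx) (w : EucSp m) :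
    HasFDerivAt (fun y => f y w)
      ((fderiv ℝ (fun p : EucSp nx × EucSp m => f p.1 p.2) (z, w)).comp
        (ContinuousLinearMap.inl ℝ (EucSp nx) (EucSp m))) z := by
  have hdF := ((hf.differentiable one_ne_zero) (z, w)).hasFDerivAt
  exact HasFDerivAt.comp z (f := fun e : EucSp nx => (e, w)) hdF (hasFDerivAt_prodMk_left z w)

lemma fderiv_partial (f : EucSp nx → EucSp m → EucSp nx)
    (hf : ContDiff ℝ 1 fun p : EucSp nx × EucSp m => f p.1 p.2) (z : EucSp nx) (w : EucSp m) :
    fderiv ℝ (fun y => f y w) z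
      = (fderiv ℝ (fun p : EucSp nx × EucSp m => f p.1 p.2) (z, w)).comp
        (ContinuousLinearMap.inl ℝ (EucSp nx) (EucSp m)) :=
  (hasFDerivAt_partial f hf z w).fderiv

lemma continuous_partial_fderiv (f : EucSp nx → EucSp m → EucSp nx)
    (hf : ContDiff ℝ 1 fun p : EucSp nx × EucSp m => f p.1 p.2) :
    Continuous (fun p : EucSp nx × EucSp m => fderiv ℝ (fun y => f y p.2) p.1) := by
  have h1 : Continuous (fun p : EucSp nx × EucSp m =>
      (fderiv ℝ (fun p : EucSp nx × EucSp m => f p.1 p.2) p).comp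
        (ContinuousLinearMap.inl ℝ (EucSp nx) (EucSp m))) :=
    (hf.continuous_fderiv one_ne_zero).clm_comp continuous_const
  refine h1.congr fun p => ?_
  rw [fderiv_partial f hf p.1 p.2]

/-- Uniform first-order Taylor estimate on bounded sets. -/
lemma uniform_taylor (f : EucSp nx → EucSp m → EucSp nx)
    (hf : ContDiff ℝ 1 fun p : EucSp nx × EucSp m => f p.1 p.2)
    (R ρ : ℝ) {η : ℝ} (hη : 0 < η) :
    ∃ δ > 0, ∀ (z₀ : EucSp nx) (w : EucSp m) (h : EucSp nx), ‖z₀‖ ≤ R → ‖w‖ ≤ ρ → ‖h‖ ≤ δ →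
      ‖f (z₀ + h) w - f z₀ w - (fderiv ℝ (fun y => f y w) z₀) h‖ ≤ η * ‖h‖ := by
  set B : EucSp nx × EucSp m → (EucSp nx →L[ℝ] EucSp nx) :=
    fun p => fderiv ℝ (fun y => f y p.2) p.1 with hB
  have hBc : Continuous B := continuous_partial_fderiv f hf
  set Kset : Set (EucSp nx × EucSp m) :=
    (Metric.closedBall (0 : EucSp nx) (R + 1)) ×ˢ (Metric.closedBall (0 : EucSp m) ρ) with hK
  have hKc : IsCompact Kset :=
    (isCompact_closedBall _ _).prod (isCompact_closedBall _ _)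
  have hUC := hKc.uniformContinuousOn_of_continuous hBc.continuousOn
  rw [Metric.uniformContinuousOn_iff] at hUC
  obtain ⟨δ', hδ', hUC⟩ := hUC η hη
  refine ⟨min (δ'/2) 1, by positivity, ?_⟩
  intro z₀ w h hz hw hh
  have hδle : ‖h‖ ≤ δ'/2 := hh.trans (min_le_left _ _)
  have hh1 : ‖h‖ ≤ 1 := hh.trans (min_le_right _ _)
  set g : EucSp nx → EucSp nx := fun y => f y w - (B (z₀, w)) y with hg
  have hseg : ∀ ξ ∈ segment ℝ z₀ (z₀ + h), ‖ξ - z₀‖ ≤ ‖h‖ ∧ ‖ξ‖ ≤ R + 1 := by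
    intro ξ hξ
    obtain ⟨θ₁, θ₂, hθ₁, hθ₂, hsum, rfl⟩ := hξ
    have h1 : θ₁ • z₀ + θ₂ • (z₀ + h) - z₀ = θ₂ • h := by
      rw [smul_add]
      have : θ₁ • z₀ + θ₂ • z₀ = z₀ := by
        rw [← add_smul, hsum, one_smul]
      rw [← add_assoc, this]; abel
    constructor
    · rw [h1, norm_smul]
      calc ‖θ₂‖ * ‖h‖ ≤ 1 * ‖h‖ := by
            apply mul_le_mul_of_nonneg_right _ (norm_nonneg h)
            rw [Real.norm_eq_abs, abs_of_nonneg hθ₂]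
            linarith
        _ = ‖h‖ := one_mul _
    · have : θ₁ • z₀ + θ₂ • (z₀ + h) = z₀ + θ₂ • h := by
        rw [smul_add, ← add_assoc, ← add_smul, hsum, one_smul]
      rw [this]
      calc ‖z₀ + θ₂ • h‖ ≤ ‖z₀‖ + ‖θ₂ • h‖ := norm_add_le _ _
        _ ≤ R + 1 := by
            apply add_le_add hz
            rw [norm_smul, Real.norm_eq_abs, abs_of_nonneg hθ₂]
            calc θ₂ * ‖h‖ ≤ 1 * ‖h‖ :=
                mul_le_mul_of_nonneg_right (by linarith) (norm_nonneg h)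
              _ ≤ 1 := by rw [one_mul]; exact hh1
  have hdiff : ∀ ξ ∈ segment ℝ z₀ (z₀ + h), DifferentiableAt ℝ g ξ := by
    intro ξ _
    exact ((hasFDerivAt_partial f hf ξ w).differentiableAt).sub
      ((B (z₀, w)).differentiableAt)
  have hbound : ∀ ξ ∈ segment ℝ z₀ (z₀ + h), ‖fderiv ℝ g ξ‖ ≤ η := by
    intro ξ hξ
    have hfd : fderiv ℝ g ξ = B (ξ, w) - B (z₀, w) := by
      rw [hg]
      rw [fderiv_fun_sub ((hasFDerivAt_partial f hf ξ w).differentiableAt)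
        ((B (z₀, w)).differentiableAt)]
      rw [(B (z₀, w)).fderiv]
    rw [hfd]
    have hmem1 : (ξ, w) ∈ Kset := by
      refine ⟨?_, by simpa using hw⟩
      simpa using (hseg ξ hξ).2
    have hmem2 : ((z₀ : EucSp nx), w) ∈ Kset := by
      refine ⟨?_, by simpa using hw⟩
      simp only [Metric.mem_closedBall, dist_zero_right]
      linarith
    have hd : dist ((ξ, w) : EucSp nx × EucSp m) (z₀, w) < δ' := by
      rw [Prod.dist_eq]
      simp only [dist_self, dist_eq_norm]
      have := (hseg ξ hξ).1
      have hδ2 : δ'/2 < δ' := by linarith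
      calc max ‖ξ - z₀‖ (0:ℝ) ≤ max (δ'/2) 0 := by
            apply max_le_max _ le_rfl
            exact this.trans hδle
        _ = δ'/2 := by rw [max_eq_left (by linarith)]
        _ < δ' := hδ2
    have h5 := hUC (ξ, w) hmem1 (z₀, w) hmem2 hd
    rw [dist_eq_norm] at h5
    exact h5.le
  have hmv := (convex_segment z₀ (z₀ + h)).norm_image_sub_le_of_norm_fderiv_le hdiff hbound
    (left_mem_segment ℝ z₀ (z₀ + h)) (right_mem_segment ℝ z₀ (z₀ + h))
  have : g (z₀ + h) - g z₀ = f (z₀ + h) w - f z₀ w - (B (z₀, w)) h := by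
    rw [hg]
    simp only [map_add]
    abel
  rw [this] at hmv
  have heq : (fderiv ℝ (fun y => f y w) z₀) = B (z₀, w) := rfl
  rw [heq]
  calc ‖f (z₀ + h) w - f z₀ w - (B (z₀, w)) h‖ ≤ η * ‖z₀ + h - z₀‖ := hmv
    _ = η * ‖h‖ := by rw [add_sub_cancel_left]

lemma volterra_exists {nx : ℕ} (τ b K₁ : ℝ) (hτb : τ ≤ b) (hK₁ : 0 ≤ K₁)
    (A : ℝ → (EucSp nx →L[ℝ] EucSp nx)) (D : Finset ℝ)
    (hAcont : ∀ s ∈ Set.Icc τ b, s ∉ D → ContinuousWithinAt A (Set.Icc τ b) s)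
    (hAbd : ∀ s ∈ Set.Icc τ b, ‖A s‖ ≤ K₁) (c : EucSp nx) :
    ∃ Ψ : ℝ → EucSp nx, Continuous Ψ ∧ Ψ τ = c ∧
      ∀ t ∈ Set.Icc τ b, Ψ t = c + ∫ s in τ..t, (A s) (Ψ s) := by
  classical
  set proj : ℝ → ℝ := fun t => max τ (min t b) with hprojdef
  have hproj_mem : ∀ t, proj t ∈ Set.Icc τ b :=
    fun t => ⟨le_max_left _ _, max_le hτb (min_le_right _ _)⟩
  have hproj_id : ∀ t ∈ Set.Icc τ b, proj t = t := by
    intro t ht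
    simp only [hprojdef]
    rw [min_eq_left ht.2, max_eq_right ht.1]
  have hproj_idem : ∀ t, proj (proj t) = proj t := fun t => hproj_id _ (hproj_mem t)
  have hproj_cont : Continuous proj := continuous_const.max (continuous_id.min continuous_const)
  set X := BoundedContinuousFunction ℝ (EucSp nx) with hX
  have hInt : ∀ g : X, IntervalIntegrable (fun s => (A s) (g s)) MeasureTheory.volume τ b := by
    intro g
    refine pc_intervalIntegrable (C := K₁ * ‖g‖) hτb D ?_ ?_
    · intro s hs hD
      exact (isBoundedBilinearMap_apply.continuous.continuousAt.comp_continuousWithinAt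
        ((hAcont s hs hD).prodMk (g.continuous.continuousWithinAt)))
    · intro s hs
      calc ‖(A s) (g s)‖ ≤ ‖A s‖ * ‖g s‖ := (A s).le_opNorm _
        _ ≤ K₁ * ‖g‖ := mul_le_mul (hAbd s hs) (g.norm_coe_le_norm s) (norm_nonneg _) hK₁
  have hIntSub : ∀ (g : X) (t : ℝ), t ∈ Set.Icc τ b →
      IntervalIntegrable (fun s => (A s) (g s)) MeasureTheory.volume τ t := by
    intro g t ht
    refine (hInt g).mono_set ?_
    rw [Set.uIcc_of_le hτb, Set.uIcc_of_le ht.1]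
    exact Set.Icc_subset_Icc le_rfl ht.2
  have hFcont : ∀ g : X, Continuous (fun t => c + ∫ s in τ..(proj t), (A s) (g s)) := by
    intro g
    have hprim : ContinuousOn (fun r => ∫ s in τ..r, (A s) (g s)) (Set.uIcc τ b) :=
      intervalIntegral.continuousOn_primitive_interval' (hInt g) Set.left_mem_uIcc
    refine continuous_const.add (hprim.comp_continuous hproj_cont ?_)
    intro t
    rw [Set.uIcc_of_le hτb]
    exact hproj_mem t
  have hFbd : ∀ (g : X) (t : ℝ),
      ‖c + ∫ s in τ..(proj t), (A s) (g s)‖ ≤ ‖c‖ + (K₁ * ‖g‖) * (b - τ) := by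
    intro g t
    refine (norm_add_le _ _).trans (add_le_add_right ?_ _)
    have h1 : ‖∫ s in τ..(proj t), (A s) (g s)‖ ≤ (K₁ * ‖g‖) * |proj t - τ| := by
      apply intervalIntegral.norm_integral_le_of_norm_le_const
      intro s hs
      rw [Set.uIoc_of_le (hproj_mem t).1] at hs
      have hsmem : s ∈ Set.Icc τ b := ⟨hs.1.le, hs.2.trans (hproj_mem t).2⟩
      calc ‖(A s) (g s)‖ ≤ ‖A s‖ * ‖g s‖ := (A s).le_opNorm _
        _ ≤ K₁ * ‖g‖ := mul_le_mul (hAbd s hsmem) (g.norm_coe_le_norm s) (norm_nonneg _) hK₁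
    refine h1.trans ?_
    have h2 : |proj t - τ| ≤ b - τ := by
      rw [abs_of_nonneg (sub_nonneg.2 (hproj_mem t).1)]
      have := (hproj_mem t).2; linarith
    exact mul_le_mul_of_nonneg_left h2 (by positivity)
  set T : X → X := fun g => BoundedContinuousFunction.ofNormedAddCommGroup
    (fun t => c + ∫ s in τ..(proj t), (A s) (g s)) (hFcont g) _ (hFbd g) with hT
  have hT_apply : ∀ (g : X) (t : ℝ), T g t = c + ∫ s in τ..(proj t), (A s) (g s) :=
    fun g t => rfl
  have hTproj : ∀ (g : X) (t : ℝ), T g t = T g (proj t) := by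
    intro g t
    rw [hT_apply, hT_apply, hproj_idem]
  have key : ∀ (n : ℕ) (g h : X), ∀ t ∈ Set.Icc τ b,
      ‖(T^[n] g) t - (T^[n] h) t‖
        ≤ K₁ ^ n * (t - τ) ^ n / (Nat.factorial n) * dist g h := by
    intro n
    induction n with
    | zero =>
      intro g h t ht
      have h0 := BoundedContinuousFunction.dist_coe_le_dist (f := g) (g := h) t; rw [dist_eq_norm] at h0; simpa using h0
    | succ n ih =>
      intro g h t ht
      rw [Function.iterate_succ_apply', Function.iterate_succ_apply']
      set G := T^[n] g with hG
      set H := T^[n] h with hH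
      have hdiff : T G t - T H t = ∫ s in τ..t, ((A s) (G s) - (A s) (H s)) := by
        rw [hT_apply, hT_apply, hproj_id t ht]
        rw [intervalIntegral.integral_sub (hIntSub G t ht) (hIntSub H t ht)]
        abel
      rw [hdiff]
      have hbd : ∀ s ∈ Set.Ioc τ t, ‖(A s) (G s) - (A s) (H s)‖
          ≤ K₁ * (K₁ ^ n * (s - τ) ^ n / (Nat.factorial n) * dist g h) := by
        intro s hs
        have hsmem : s ∈ Set.Icc τ b := ⟨hs.1.le, hs.2.trans ht.2⟩
        calc ‖(A s) (G s) - (A s) (H s)‖ = ‖(A s) (G s - H s)‖ := by rw [map_sub]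
          _ ≤ ‖A s‖ * ‖G s - H s‖ := (A s).le_opNorm _
          _ ≤ K₁ * (K₁ ^ n * (s - τ) ^ n / (Nat.factorial n) * dist g h) := by
              apply mul_le_mul (hAbd s hsmem) (ih g h s hsmem) (norm_nonneg _) hK₁
      have hle : ‖∫ s in τ..t, ((A s) (G s) - (A s) (H s))‖
          ≤ |∫ s in τ..t, K₁ * (K₁ ^ n * (s - τ) ^ n / (Nat.factorial n) * dist g h)| := by
        apply intervalIntegral.norm_integral_le_abs_of_norm_le
        · rw [Set.uIoc_of_le ht.1]
          filter_upwards [MeasureTheory.ae_restrict_mem measurableSet_Ioc] with s hs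
          exact hbd s hs
        · apply Continuous.intervalIntegrable
          exact continuous_const.mul (((continuous_const.mul
            ((continuous_id.sub continuous_const).pow n)).div_const _).mul continuous_const)
      refine hle.trans ?_
      have hcalc : ∫ s in τ..t, K₁ * (K₁ ^ n * (s - τ) ^ n / (Nat.factorial n) * dist g h)
          = K₁ ^ (n+1) * (t - τ) ^ (n+1) / (Nat.factorial (n+1)) * dist g h := by
        have : ∀ s : ℝ, K₁ * (K₁ ^ n * (s - τ) ^ n / (Nat.factorial n) * dist g h)
            = (K₁ ^ (n+1) / (Nat.factorial n) * dist g h) * (s - τ) ^ n := by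
          intro s; rw [pow_succ]; ring
        simp_rw [this]
        rw [intervalIntegral.integral_const_mul, pow_prim]
        rw [Nat.factorial_succ]
        have h1 : ((n:ℝ) + 1) ≠ 0 := by positivity
        have h2 : ((Nat.factorial n : ℝ)) ≠ 0 := by positivity
        push_cast
        field_simp
      have ht0 : 0 ≤ t - τ := sub_nonneg.2 ht.1
      rw [hcalc, abs_of_nonneg (mul_nonneg (div_nonneg
        (mul_nonneg (pow_nonneg hK₁ _) (pow_nonneg ht0 _)) (by positivity)) dist_nonneg)]
  have hlip : ∀ n : ℕ, 1 ≤ n → ∀ g h : X,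
      dist (T^[n] g) (T^[n] h) ≤ (K₁ * (b - τ)) ^ n / (Nat.factorial n) * dist g h := by
    intro n hn g h
    rw [BoundedContinuousFunction.dist_le (mul_nonneg (div_nonneg
      (pow_nonneg (mul_nonneg hK₁ (sub_nonneg.2 hτb)) _) (by positivity)) dist_nonneg)]
    intro t
    obtain ⟨k, rfl⟩ := Nat.exists_eq_add_of_le hn
    have hval : ∀ (g' : X), (T^[1 + k] g') t = (T^[1 + k] g') (proj t) := by
      intro g'
      rw [add_comm 1 k, Function.iterate_succ_apply']
      exact hTproj _ t
    rw [dist_eq_norm, hval g, hval h]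
    refine (key (1+k) g h (proj t) (hproj_mem t)).trans ?_
    rw [mul_pow]
    have hp1 : 0 ≤ proj t - τ := sub_nonneg.2 (hproj_mem t).1
    have hp2 : proj t - τ ≤ b - τ := by have := (hproj_mem t).2; linarith
    gcongr
  obtain ⟨n, hn1, hq⟩ : ∃ n : ℕ, 1 ≤ n ∧ (K₁ * (b - τ)) ^ n / (Nat.factorial n) < 1 := by
    have h0 := FloorSemiring.tendsto_pow_div_factorial_atTop (K := ℝ) (K₁ * (b - τ))
    have h1 : ∀ᶠ n : ℕ in Filter.atTop, (K₁ * (b - τ)) ^ n / (Nat.factorial n) < 1 :=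
      h0.eventually_lt_const one_pos
    obtain ⟨n, hn, hn'⟩ := ((Filter.eventually_ge_atTop 1).and h1).exists
    exact ⟨n, hn, hn'⟩
  set q : NNReal := ⟨(K₁ * (b - τ)) ^ n / (Nat.factorial n),
    div_nonneg (pow_nonneg (mul_nonneg hK₁ (sub_nonneg.2 hτb)) _) (by positivity)⟩ with hqdef
  have hcontr : ContractingWith q (T^[n]) := by
    constructor
    · exact_mod_cast hq
    · apply LipschitzWith.of_dist_le_mul
      intro g h
      exact hlip n hn1 g h
  have hfix : Function.IsFixedPt T (hcontr.fixedPoint (T^[n])) :=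
    ContractingWith.isFixedPt_fixedPoint_iterate hcontr
  set p := hcontr.fixedPoint (T^[n]) with hp
  have hfixfun : ∀ r : ℝ, p r = T p r := fun r => (congrArg (fun z : X => z r) hfix).symm
  refine ⟨fun t => p t, p.continuous, ?_, ?_⟩
  · show p τ = c
    rw [hfixfun τ, hT_apply, hproj_id τ (Set.left_mem_Icc.2 hτb),
      intervalIntegral.integral_same, add_zero]
  · intro t ht
    show p t = c + ∫ s in τ..t, (A s) (p s)
    rw [hfixfun t, hT_apply, hproj_id t ht]

end AuxLemmas

set_option maxHeartbeats 1000000 in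
/-- Variational equation, Lemma 15: the state variation
`Ψ₁(t) = lim_{ε→0⁺} (x₁^ε(t) − x₁(t))/ε` uniquely exists on `[τ, 1]` and satisfies the
linear variational equation `Ψ̇₁ = (∂f/∂x)(x₁, u) Ψ₁` with initial condition
`Ψ₁(τ) = f(x₁(τ), v) − f(x₁(τ), u(τ))`. -/
theorem variational_equation {nx m : ℕ} (T : ℕ) (hT : 1 ≤ T)
    (ρmax K₁ : ℝ) (hK₁ : 1 ≤ K₁)
    (f : EucSp nx → EucSp m → EucSp nx)
    (hf : ContDiff ℝ 1 fun p : EucSp nx × EucSp m => f p.1 p.2)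
    (hLip : ∀ (x' x'' : EucSp nx) (u' u'' : EucSp m), ‖u'‖ ≤ ρmax → ‖u''‖ ≤ ρmax →
      ‖f x' u' - f x'' u''‖ ≤ K₁ * (‖x' - x''‖ + ‖u' - u''‖))
    (u : ℝ → EucSp m) (hu : AdmissibleCtrl (T : ℝ) ρmax u)
    (τ : ℝ) (hτ : τ ∈ Set.Ioo (0 : ℝ) 1) (v : EucSp m) (hv : ‖v‖ ≤ ρmax)
    (huτ : ContinuousWithinAt u (Set.Iic τ) τ)
    (x₀ : EucSp nx) (x : ℝ → EucSp nx) (xe : ℝ → ℝ → EucSp nx)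
    (hxnom : x 0 = x₀ ∧ IsSolOn f u 0 1 x)
    (hxe : ∀ ε ∈ Set.Icc (0 : ℝ) τ,
      xe ε 0 = x₀ ∧ IsSolOn f (perturb u τ v ε) 0 1 (xe ε)) :
    ∃ Ψ : ℝ → EucSp nx,
      (∀ t ∈ Set.Icc τ 1,
        Tendsto (fun ε : ℝ => ε⁻¹ • (xe ε t - x t)) (𝓝[>] 0) (𝓝 (Ψ t))) ∧
      Ψ τ = f (x τ) v - f (x τ) (u τ) ∧
      ContinuousOn Ψ (Set.Icc τ 1) ∧
      (∀ t ∈ Set.Icc τ 1,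
        Ψ t = Ψ τ + ∫ s in τ..t, (fderiv ℝ (fun z => f z (u s)) (x s)) (Ψ s)) ∧
      ∀ Ψ' : ℝ → EucSp nx, ContinuousOn Ψ' (Set.Icc τ 1) →
        Ψ' τ = f (x τ) v - f (x τ) (u τ) →
        (∀ t ∈ Set.Icc τ 1,
          Ψ' t = Ψ' τ + ∫ s in τ..t, (fderiv ℝ (fun z => f z (u s)) (x s)) (Ψ' s)) →
        ∀ t ∈ Set.Icc τ 1, Ψ' t = Ψ t := by
  classical
  obtain ⟨hτ0, hτ1⟩ := hτ
  obtain ⟨⟨D, hD⟩, hubdT⟩ := hu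
  have hT1 : (1:ℝ) ≤ (T:ℝ) := by exact_mod_cast hT
  have hsub01T : Set.Icc (0:ℝ) 1 ⊆ Set.Icc (0:ℝ) (T:ℝ) := Set.Icc_subset_Icc le_rfl hT1
  have hsubτ1 : Set.Icc τ 1 ⊆ Set.Icc (0:ℝ) 1 := Set.Icc_subset_Icc hτ0.le le_rfl
  have hx0 : x 0 = x₀ := hxnom.1
  have hxc : ContinuousOn x (Set.Icc 0 1) := hxnom.2.1
  have hxeq : ∀ t ∈ Set.Icc (0:ℝ) 1, x t = x 0 + ∫ s in (0:ℝ)..t, f (x s) (u s) := hxnom.2.2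
  have hρ0 : 0 ≤ ρmax := (norm_nonneg v).trans hv
  have hK₁0 : (0:ℝ) ≤ K₁ := le_trans zero_le_one hK₁
  have hubd : ∀ s ∈ Set.Icc (0:ℝ) 1, ‖u s‖ ≤ ρmax := fun s hs => hubdT s (hsub01T hs)
  have hLipx : ∀ (z z' : EucSp nx) (w : EucSp m), ‖w‖ ≤ ρmax →
      ‖f z w - f z' w‖ ≤ K₁ * ‖z - z'‖ := by
    intro z z' w hw
    have := hLip z z' w w hw hw
    simpa using this
  have hucont : ∀ s ∈ Set.Icc (0:ℝ) 1, s ∉ D → ContinuousWithinAt u (Set.Icc 0 1) s :=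
    fun s hs hsD => (hD s (hsub01T hs) hsD).mono hsub01T
  -- the matrix of the linearized system
  set A : ℝ → (EucSp nx →L[ℝ] EucSp nx) := fun s => fderiv ℝ (fun z => f z (u s)) (x s) with hA
  have hAbd : ∀ s ∈ Set.Icc (0:ℝ) 1, ‖A s‖ ≤ K₁ := by
    intro s hs
    apply norm_fderiv_le_of_lip' ℝ hK₁0
    exact Filter.Eventually.of_forall (fun y => hLipx y (x s) (u s) (hubd s hs))
  have hAcont : ∀ s ∈ Set.Icc (0:ℝ) 1, s ∉ D → ContinuousWithinAt A (Set.Icc 0 1) s := by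
    intro s hs hsD
    exact (continuous_partial_fderiv f hf).continuousAt.comp_continuousWithinAt
      ((hxc s hs).prodMk (hucont s hs hsD))
  -- Ψ from the Volterra equation
  obtain ⟨Ψ, hΨcont, hΨτ, hΨeq⟩ := volterra_exists τ 1 K₁ hτ1.le hK₁0 A D
    (fun s hs hsD => (hAcont s (hsubτ1 hs) hsD).mono hsubτ1)
    (fun s hs => hAbd s (hsubτ1 hs))
    (f (x τ) v - f (x τ) (u τ))
  -- bounds
  obtain ⟨Mx, hMx⟩ := isCompact_Icc.exists_bound_of_continuousOn hxc
  have hfbd : ∀ (z : EucSp nx) (w : EucSp m), ‖w‖ ≤ ρmax →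
      ‖f z w‖ ≤ ‖f 0 v‖ + K₁ * (‖z‖ + 2 * ρmax) := by
    intro z w hw
    have h1 := hLip z 0 w v hw hv
    have h2 : ‖w - v‖ ≤ 2 * ρmax := (norm_sub_le _ _).trans (by linarith)
    calc ‖f z w‖ = ‖(f z w - f 0 v) + f 0 v‖ := by rw [sub_add_cancel]
      _ ≤ ‖f z w - f 0 v‖ + ‖f 0 v‖ := norm_add_le _ _
      _ ≤ K₁ * (‖z - 0‖ + ‖w - v‖) + ‖f 0 v‖ := add_le_add_left h1 _
      _ ≤ ‖f 0 v‖ + K₁ * (‖z‖ + 2 * ρmax) := by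
          rw [sub_zero, add_comm]
          exact add_le_add_right
            (mul_le_mul_of_nonneg_left (add_le_add_right h2 _) hK₁0) _
  -- perturbed control facts
  have hup_out1 : ∀ (ε s : ℝ), s ≤ τ - ε → perturb u τ v ε s = u s := by
    intro ε s hs
    simp only [perturb]
    rw [if_neg (fun h => absurd h.1 (not_lt.2 hs))]
  have hup_out2 : ∀ (ε s : ℝ), τ < s → perturb u τ v ε s = u s := by
    intro ε s hs
    simp only [perturb]
    rw [if_neg (fun h => absurd h.2 (not_le.2 hs))]
  have hup_in : ∀ (ε s : ℝ), τ - ε < s → s ≤ τ → perturb u τ v ε s = v := by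
    intro ε s h1 h2
    simp only [perturb]
    rw [if_pos ⟨h1, h2⟩]
  have hup_bd : ∀ ε : ℝ, ∀ s ∈ Set.Icc (0:ℝ) 1, ‖perturb u τ v ε s‖ ≤ ρmax := by
    intro ε s hs
    by_cases h : τ - ε < s ∧ s ≤ τ
    · rw [hup_in ε s h.1 h.2]; exact hv
    · simp only [perturb, if_neg h]; exact hubd s hs
  have hup_cont : ∀ ε : ℝ, ∀ s ∈ Set.Icc (0:ℝ) 1,
      s ∉ (insert (τ - ε) (insert τ D) : Finset ℝ) →
      ContinuousWithinAt (perturb u τ v ε) (Set.Icc 0 1) s := by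
    intro ε s hs hsD
    simp only [Finset.mem_insert] at hsD
    push_neg at hsD
    obtain ⟨hs1, hs2, hsD⟩ := hsD
    rcases lt_trichotomy s (τ - ε) with hlt | heq | hgt
    · refine (hucont s hs hsD).congr_of_eventuallyEq ?_ (hup_out1 ε s hlt.le)
      refine Filter.Eventually.filter_mono nhdsWithin_le_nhds ?_
      filter_upwards [Iio_mem_nhds hlt] with r hr
      exact hup_out1 ε r (le_of_lt hr)
    · exact absurd heq hs1
    · rcases lt_trichotomy s τ with h2 | h2 | h2
      · refine continuousWithinAt_const.congr_of_eventuallyEq ?_ (hup_in ε s hgt h2.le)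
        refine Filter.Eventually.filter_mono nhdsWithin_le_nhds ?_
        filter_upwards [Ioo_mem_nhds hgt h2] with r hr
        exact hup_in ε r hr.1 hr.2.le
      · exact absurd h2 hs2
      · refine (hucont s hs hsD).congr_of_eventuallyEq ?_ (hup_out2 ε s h2)
        refine Filter.Eventually.filter_mono nhdsWithin_le_nhds ?_
        filter_upwards [Ioi_mem_nhds h2] with r hr
        exact hup_out2 ε r hr
  -- data of the perturbed solutions
  have hxe_dat : ∀ ε ∈ Set.Ioc (0:ℝ) τ, xe ε 0 = x₀ ∧ ContinuousOn (xe ε) (Set.Icc 0 1) ∧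
      ∀ t ∈ Set.Icc (0:ℝ) 1, xe ε t = xe ε 0 + ∫ s in (0:ℝ)..t, f (xe ε s) (perturb u τ v ε s) := by
    intro ε hε
    obtain ⟨h1, h2⟩ := hxe ε ⟨hε.1.le, hε.2⟩
    exact ⟨h1, h2.1, h2.2⟩
  -- integrability of the nominal integrand
  have hIntX : ∀ a t : ℝ, a ∈ Set.Icc (0:ℝ) 1 → t ∈ Set.Icc (0:ℝ) 1 →
      IntervalIntegrable (fun s => f (x s) (u s)) MeasureTheory.volume a t := by
    intro a t ha htt
    have h01 : IntervalIntegrable (fun s => f (x s) (u s)) MeasureTheory.volume 0 1 := by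
      refine pc_intervalIntegrable (C := ‖f 0 v‖ + K₁ * (Mx + 2 * ρmax)) zero_le_one D ?_ ?_
      · intro s hs hsD
        exact hf.continuous.continuousAt.comp_continuousWithinAt
          ((hxc s hs).prodMk (hucont s hs hsD))
      · intro s hs
        refine (hfbd (x s) (u s) (hubd s hs)).trans ?_
        exact add_le_add_right
          (mul_le_mul_of_nonneg_left (add_le_add_left (hMx s hs) _) hK₁0) _
    exact h01.mono_set (Set.uIcc_subset_uIcc
      (by rw [Set.uIcc_of_le zero_le_one]; exact ha)
      (by rw [Set.uIcc_of_le zero_le_one]; exact htt))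
  -- integrability of the perturbed integrand
  have hIntXE : ∀ ε ∈ Set.Ioc (0:ℝ) τ, ∀ a t : ℝ, a ∈ Set.Icc (0:ℝ) 1 → t ∈ Set.Icc (0:ℝ) 1 →
      IntervalIntegrable (fun s => f (xe ε s) (perturb u τ v ε s)) MeasureTheory.volume a t := by
    intro ε hε a t ha htt
    obtain ⟨Mxe, hMxe⟩ := isCompact_Icc.exists_bound_of_continuousOn (hxe_dat ε hε).2.1
    have h01 : IntervalIntegrable (fun s => f (xe ε s) (perturb u τ v ε s))
        MeasureTheory.volume 0 1 := by
      refine pc_intervalIntegrable (C := ‖f 0 v‖ + K₁ * (Mxe + 2 * ρmax)) zero_le_one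
        (insert (τ - ε) (insert τ D)) ?_ ?_
      · intro s hs hsD
        exact hf.continuous.continuousAt.comp_continuousWithinAt
          (((hxe_dat ε hε).2.1 s hs).prodMk (hup_cont ε s hs hsD))
      · intro s hs
        refine (hfbd (xe ε s) (perturb u τ v ε s) (hup_bd ε s hs)).trans ?_
        exact add_le_add_right
          (mul_le_mul_of_nonneg_left (add_le_add_left (hMxe s hs) _) hK₁0) _
    exact h01.mono_set (Set.uIcc_subset_uIcc
      (by rw [Set.uIcc_of_le zero_le_one]; exact ha)
      (by rw [Set.uIcc_of_le zero_le_one]; exact htt))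
  have hIntE : ∀ ε ∈ Set.Ioc (0:ℝ) τ, ∀ a t : ℝ, a ∈ Set.Icc (0:ℝ) 1 → t ∈ Set.Icc (0:ℝ) 1 →
      IntervalIntegrable (fun s => f (xe ε s) (perturb u τ v ε s) - f (x s) (u s))
        MeasureTheory.volume a t :=
    fun ε hε a t ha htt => (hIntXE ε hε a t ha htt).sub (hIntX a t ha htt)
  -- the difference identity
  have hzeq0 : ∀ ε ∈ Set.Ioc (0:ℝ) τ, ∀ t ∈ Set.Icc (0:ℝ) 1,
      xe ε t - x t = ∫ s in (0:ℝ)..t,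
        (f (xe ε s) (perturb u τ v ε s) - f (x s) (u s)) := by
    intro ε hε t htt
    obtain ⟨he0, hec, heq⟩ := hxe_dat ε hε
    rw [heq t htt, hxeq t htt, he0, hx0,
      intervalIntegral.integral_sub
        (hIntXE ε hε 0 t (Set.left_mem_Icc.2 zero_le_one) htt)
        (hIntX 0 t (Set.left_mem_Icc.2 zero_le_one) htt)]
    abel
  -- continuity of the norm of the difference
  have hzcont : ∀ ε ∈ Set.Ioc (0:ℝ) τ,
      ContinuousOn (fun s => ‖xe ε s - x s‖) (Set.Icc 0 1) :=
    fun ε hε => (((hxe_dat ε hε).2.1).sub hxc).norm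
  -- Step A : the perturbed solution agrees with the nominal one before the needle
  have hzero : ∀ ε ∈ Set.Ioc (0:ℝ) τ, ∀ s ∈ Set.Icc (0:ℝ) (τ - ε), xe ε s = x s := by
    intro ε hε
    have hεa := hε.1
    have hεb := hε.2
    have hτε0 : (0:ℝ) ≤ τ - ε := sub_nonneg.2 hε.2
    have hτε1 : τ - ε ≤ 1 := by linarith
    have hsubε : Set.Icc (0:ℝ) (τ - ε) ⊆ Set.Icc (0:ℝ) 1 := Set.Icc_subset_Icc le_rfl hτε1
    have hineq : ∀ t ∈ Set.Icc (0:ℝ) (τ - ε),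
        ‖xe ε t - x t‖ ≤ 0 + K₁ * ∫ s in (0:ℝ)..t, ‖xe ε s - x s‖ := by
      intro t htt
      have hmem : t ∈ Set.Icc (0:ℝ) 1 := hsubε htt
      rw [hzeq0 ε hε t hmem, zero_add]
      have hb : ‖∫ s in (0:ℝ)..t, (f (xe ε s) (perturb u τ v ε s) - f (x s) (u s))‖
          ≤ |∫ s in (0:ℝ)..t, K₁ * ‖xe ε s - x s‖| := by
        apply intervalIntegral.norm_integral_le_abs_of_norm_le
        · rw [Set.uIoc_of_le htt.1]
          filter_upwards [MeasureTheory.ae_restrict_mem measurableSet_Ioc] with r hr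
          have hr1 : r ∈ Set.Icc (0:ℝ) 1 := ⟨hr.1.le, le_trans (hr.2.trans htt.2) hτε1⟩
          rw [hup_out1 ε r (hr.2.trans htt.2)]
          exact hLipx (xe ε r) (x r) (u r) (hubd r hr1)
        · exact (((hzcont ε hε).mono (Set.Icc_subset_Icc le_rfl
            (htt.2.trans hτε1))).intervalIntegrable_of_Icc htt.1).const_mul K₁
      refine hb.trans ?_
      rw [intervalIntegral.integral_const_mul, abs_of_nonneg (mul_nonneg hK₁0
        (intervalIntegral.integral_nonneg htt.1 (fun r _ => norm_nonneg _)))]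
    have hgr := gronwall_aux (a := 0) (b := τ - ε) hK₁0 le_rfl
      ((hzcont ε hε).mono hsubε) hineq
    intro s hs
    have := hgr s hs
    rw [zero_mul] at this
    exact sub_eq_zero.1 (norm_le_zero_iff.1 this)
  -- needle-interval identity and estimate
  have hP1 : ∀ ε ∈ Set.Ioc (0:ℝ) τ,
      (∀ s ∈ Set.Icc (τ - ε) τ, xe ε s - x s = ∫ r in (τ - ε)..s,
        (f (xe ε r) (perturb u τ v ε r) - f (x r) (u r))) ∧
      (∀ s ∈ Set.Icc (τ - ε) τ, ‖xe ε s - x s‖ ≤ (K₁ * (2 * ρmax) * Real.exp K₁) * ε) := by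
    intro ε hε
    have hεa := hε.1
    have hεb := hε.2
    have hτε0 : (0:ℝ) ≤ τ - ε := sub_nonneg.2 hε.2
    have hτεmem : τ - ε ∈ Set.Icc (0:ℝ) 1 := ⟨hτε0, by linarith⟩
    have hsubε : Set.Icc (τ - ε) τ ⊆ Set.Icc (0:ℝ) 1 :=
      Set.Icc_subset_Icc hτε0 hτ1.le
    have hid : ∀ s ∈ Set.Icc (τ - ε) τ, xe ε s - x s = ∫ r in (τ - ε)..s,
        (f (xe ε r) (perturb u τ v ε r) - f (x r) (u r)) := by
      intro s hs
      have hs01 : s ∈ Set.Icc (0:ℝ) 1 := hsubε hs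
      have e2 : (∫ r in (0:ℝ)..(τ - ε),
          (f (xe ε r) (perturb u τ v ε r) - f (x r) (u r))) = 0 := by
        rw [← hzeq0 ε hε (τ - ε) hτεmem,
          hzero ε hε (τ - ε) ⟨hτε0, le_rfl⟩, sub_self]
      have hadd := intervalIntegral.integral_add_adjacent_intervals
        (hIntE ε hε 0 (τ - ε) (Set.left_mem_Icc.2 zero_le_one) hτεmem)
        (hIntE ε hε (τ - ε) s hτεmem hs01)
      rw [hzeq0 ε hε s hs01, ← hadd, e2, zero_add]
    refine ⟨hid, ?_⟩
    have hineq : ∀ s ∈ Set.Icc (τ - ε) τ,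
        ‖xe ε s - x s‖ ≤ K₁ * (2 * ρmax) * ε +
          K₁ * ∫ r in (τ - ε)..s, ‖xe ε r - x r‖ := by
      intro s hs
      rw [hid s hs]
      have hb : ‖∫ r in (τ - ε)..s, (f (xe ε r) (perturb u τ v ε r) - f (x r) (u r))‖
          ≤ |∫ r in (τ - ε)..s, (K₁ * ‖xe ε r - x r‖ + K₁ * (2 * ρmax))| := by
        apply intervalIntegral.norm_integral_le_abs_of_norm_le
        · rw [Set.uIoc_of_le hs.1]
          filter_upwards [MeasureTheory.ae_restrict_mem measurableSet_Ioc] with r hr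
          have hr01 : r ∈ Set.Icc (0:ℝ) 1 := hsubε ⟨hr.1.le, hr.2.trans hs.2⟩
          rw [hup_in ε r hr.1 (hr.2.trans hs.2)]
          have h3 : ‖v - u r‖ ≤ 2 * ρmax := (norm_sub_le _ _).trans
            (by linarith [hubd r hr01])
          calc ‖f (xe ε r) v - f (x r) (u r)‖
              ≤ K₁ * (‖xe ε r - x r‖ + ‖v - u r‖) :=
                hLip _ _ v (u r) hv (hubd r hr01)
            _ ≤ K₁ * ‖xe ε r - x r‖ + K₁ * (2 * ρmax) := by
                rw [mul_add]
                exact add_le_add_right (mul_le_mul_of_nonneg_left h3 hK₁0) _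
        · exact ((((hzcont ε hε).mono (fun y hy => hsubε ⟨hy.1,
            hy.2.trans hs.2⟩)).intervalIntegrable_of_Icc hs.1).const_mul
            K₁).add intervalIntegrable_const
      refine hb.trans ?_
      have hsplit : ∫ r in (τ - ε)..s, (K₁ * ‖xe ε r - x r‖ + K₁ * (2 * ρmax))
          = (K₁ * ∫ r in (τ - ε)..s, ‖xe ε r - x r‖) + (s - (τ - ε)) * (K₁ * (2 * ρmax)) := by
        rw [intervalIntegral.integral_add
          ((((hzcont ε hε).mono (fun y hy => hsubε ⟨hy.1, hy.2.trans hs.2⟩)).intervalIntegrable_of_Icc hs.1).const_mul K₁)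
          intervalIntegrable_const,
          intervalIntegral.integral_const_mul, intervalIntegral.integral_const,
          smul_eq_mul]
      have hnn : 0 ≤ ∫ r in (τ - ε)..s, ‖xe ε r - x r‖ :=
        intervalIntegral.integral_nonneg hs.1 (fun r _ => norm_nonneg _)
      have hKρ : (0:ℝ) ≤ K₁ * (2 * ρmax) := mul_nonneg hK₁0 (by linarith)
      rw [hsplit, abs_of_nonneg (add_nonneg (mul_nonneg hK₁0 hnn)
        (mul_nonneg (by linarith [hs.1] : (0:ℝ) ≤ s - (τ - ε)) hKρ))]
      have h4 : (s - (τ - ε)) * (K₁ * (2 * ρmax)) ≤ K₁ * (2 * ρmax) * ε := by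
        have h5 : s - (τ - ε) ≤ ε := by linarith [hs.2]
        calc (s - (τ - ε)) * (K₁ * (2 * ρmax)) ≤ ε * (K₁ * (2 * ρmax)) :=
            mul_le_mul_of_nonneg_right h5 hKρ
          _ = K₁ * (2 * ρmax) * ε := by ring
      linarith
    have hgr := gronwall_aux (a := τ - ε) (b := τ) hK₁0
      (mul_nonneg (mul_nonneg hK₁0 (by linarith : (0:ℝ) ≤ 2 * ρmax)) hεa.le)
      ((hzcont ε hε).mono hsubε) hineq
    intro s hs
    refine (hgr s hs).trans ?_
    have h6 : K₁ * (s - (τ - ε)) ≤ K₁ := by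
      have : s - (τ - ε) ≤ 1 := by
        have := hs.2; have := hε.2; have := hτ1; linarith [hε.1]
      calc K₁ * (s - (τ - ε)) ≤ K₁ * 1 := mul_le_mul_of_nonneg_left this hK₁0
        _ = K₁ := mul_one _
    calc K₁ * (2 * ρmax) * ε * Real.exp (K₁ * (s - (τ - ε)))
        ≤ K₁ * (2 * ρmax) * ε * Real.exp K₁ :=
          mul_le_mul_of_nonneg_left (Real.exp_le_exp.2 h6)
            (mul_nonneg (mul_nonneg hK₁0 (by linarith)) hεa.le)
      _ = (K₁ * (2 * ρmax) * Real.exp K₁) * ε := by ring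
  -- main interval identity and estimate
  have hP2 : ∀ ε ∈ Set.Ioc (0:ℝ) τ,
      (∀ t ∈ Set.Icc τ 1, xe ε t - x t = (xe ε τ - x τ) + ∫ s in τ..t,
        (f (xe ε s) (perturb u τ v ε s) - f (x s) (u s))) ∧
      (∀ t ∈ Set.Icc τ 1, ‖xe ε t - x t‖
        ≤ (K₁ * (2 * ρmax) * Real.exp K₁ * Real.exp K₁) * ε) := by
    intro ε hε
    have hεa := hε.1
    have hεb := hε.2
    have hτmem : τ ∈ Set.Icc (0:ℝ) 1 := ⟨hτ0.le, hτ1.le⟩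
    have hid : ∀ t ∈ Set.Icc τ 1, xe ε t - x t = (xe ε τ - x τ) + ∫ s in τ..t,
        (f (xe ε s) (perturb u τ v ε s) - f (x s) (u s)) := by
      intro t ht
      have ht01 : t ∈ Set.Icc (0:ℝ) 1 := hsubτ1 ht
      have hadd := intervalIntegral.integral_add_adjacent_intervals
        (hIntE ε hε 0 τ (Set.left_mem_Icc.2 zero_le_one) hτmem)
        (hIntE ε hε τ t hτmem ht01)
      rw [hzeq0 ε hε t ht01, ← hadd, ← hzeq0 ε hε τ hτmem]
    refine ⟨hid, ?_⟩
    have hzτbd : ‖xe ε τ - x τ‖ ≤ (K₁ * (2 * ρmax) * Real.exp K₁) * ε :=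
      (hP1 ε hε).2 τ ⟨by linarith [hε.1], le_rfl⟩
    have hineq : ∀ t ∈ Set.Icc τ 1,
        ‖xe ε t - x t‖ ≤ (K₁ * (2 * ρmax) * Real.exp K₁) * ε +
          K₁ * ∫ s in τ..t, ‖xe ε s - x s‖ := by
      intro t ht
      rw [hid t ht]
      refine (norm_add_le _ _).trans ?_
      have hb : ‖∫ s in τ..t, (f (xe ε s) (perturb u τ v ε s) - f (x s) (u s))‖
          ≤ |∫ s in τ..t, K₁ * ‖xe ε s - x s‖| := by
        apply intervalIntegral.norm_integral_le_abs_of_norm_le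
        · rw [Set.uIoc_of_le ht.1]
          filter_upwards [MeasureTheory.ae_restrict_mem measurableSet_Ioc] with r hr
          have hr01 : r ∈ Set.Icc (0:ℝ) 1 := hsubτ1 ⟨hr.1.le, hr.2.trans ht.2⟩
          rw [hup_out2 ε r hr.1]
          exact hLipx (xe ε r) (x r) (u r) (hubd r hr01)
        · exact (((hzcont ε hε).mono (fun y hy => hsubτ1 ⟨hy.1, hy.2.trans
            ht.2⟩)).intervalIntegrable_of_Icc ht.1).const_mul K₁
      have hb2 : |∫ s in τ..t, K₁ * ‖xe ε s - x s‖|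
          = K₁ * ∫ s in τ..t, ‖xe ε s - x s‖ := by
        rw [intervalIntegral.integral_const_mul, abs_of_nonneg (mul_nonneg hK₁0
          (intervalIntegral.integral_nonneg ht.1 (fun r _ => norm_nonneg _)))]
      have := hb.trans_eq hb2
      linarith [hzτbd]
    have hgr := gronwall_aux (a := τ) (b := 1) hK₁0
      (mul_nonneg (mul_nonneg (mul_nonneg hK₁0 (by linarith : (0:ℝ) ≤ 2 * ρmax))
        (Real.exp_pos _).le) hεa.le)
      ((hzcont ε hε).mono hsubτ1) hineq
    intro t ht
    refine (hgr t ht).trans ?_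
    have h6 : K₁ * (t - τ) ≤ K₁ := by
      have : t - τ ≤ 1 := by have := ht.2; linarith
      calc K₁ * (t - τ) ≤ K₁ * 1 := mul_le_mul_of_nonneg_left this hK₁0
        _ = K₁ := mul_one _
    calc (K₁ * (2 * ρmax) * Real.exp K₁) * ε * Real.exp (K₁ * (t - τ))
        ≤ (K₁ * (2 * ρmax) * Real.exp K₁) * ε * Real.exp K₁ :=
          mul_le_mul_of_nonneg_left (Real.exp_le_exp.2 h6)
            (mul_nonneg (mul_nonneg (mul_nonneg hK₁0 (by linarith))
              (Real.exp_pos _).le) hεa.le)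
      _ = (K₁ * (2 * ρmax) * Real.exp K₁ * Real.exp K₁) * ε := by ring
  -- abbreviations for the constants
  set C₀ : ℝ := K₁ * (2 * ρmax) * Real.exp K₁ with hC₀def
  set C₁ : ℝ := C₀ * Real.exp K₁ with hC₁def
  have hC₀0 : 0 ≤ C₀ := by positivity
  have hC₁0 : 0 ≤ C₁ := by positivity
  -- integrability of A applied to continuous functions
  have hIntA : ∀ (W : ℝ → EucSp nx), ContinuousOn W (Set.Icc τ 1) → ∀ r ∈ Set.Icc τ 1,
      IntervalIntegrable (fun s => (A s) (W s)) MeasureTheory.volume τ r := by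
    intro W hW r hr
    obtain ⟨MW, hMW⟩ := isCompact_Icc.exists_bound_of_continuousOn hW
    have h1 : IntervalIntegrable (fun s => (A s) (W s)) MeasureTheory.volume τ 1 := by
      refine pc_intervalIntegrable (C := K₁ * MW) hτ1.le D ?_ ?_
      · intro s hs hsD
        exact isBoundedBilinearMap_apply.continuous.continuousAt.comp_continuousWithinAt
          (((hAcont s (hsubτ1 hs) hsD).mono hsubτ1).prodMk (hW s hs))
      · intro s hs
        calc ‖(A s) (W s)‖ ≤ ‖A s‖ * ‖W s‖ := (A s).le_opNorm _
          _ ≤ K₁ * MW := mul_le_mul (hAbd s (hsubτ1 hs)) (hMW s hs) (norm_nonneg _) hK₁0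
    exact h1.mono_set (Set.uIcc_subset_uIcc
      (by rw [Set.uIcc_of_le hτ1.le]; exact Set.left_mem_Icc.2 hτ1.le)
      (by rw [Set.uIcc_of_le hτ1.le]; exact hr))
  -- the main quantitative estimate
  have hmain : ∀ η : ℝ, 0 < η → ∃ ε₀ : ℝ, 0 < ε₀ ∧ ε₀ ≤ τ ∧ ∀ ε : ℝ, 0 < ε → ε ≤ ε₀ →
      ∀ t ∈ Set.Icc τ 1, ‖ε⁻¹ • (xe ε t - x t) - Ψ t‖
        ≤ (K₁ * C₀ * ε + 3 * K₁ * η + η * C₁) * Real.exp K₁ := by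
    intro η hη
    obtain ⟨δ₂, hδ₂, htay⟩ := uniform_taylor f hf Mx ρmax hη
    have hxm := hxc τ ⟨hτ0.le, hτ1.le⟩
    rw [Metric.continuousWithinAt_iff] at hxm
    obtain ⟨δx, hδx, hxm⟩ := hxm η hη
    have hum := huτ
    rw [Metric.continuousWithinAt_iff] at hum
    obtain ⟨δu, hδu, hum⟩ := hum η hη
    have hC₁1 : (0:ℝ) < C₁ + 1 := by linarith
    refine ⟨min τ (min δx (min δu (δ₂ / (C₁ + 1)))),
      lt_min hτ0 (lt_min hδx (lt_min hδu (div_pos hδ₂ hC₁1))), min_le_left _ _, ?_⟩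
    intro ε hε0 hεle t ht
    have hετ : ε ≤ τ := hεle.trans (min_le_left _ _)
    have hεδx : ε ≤ δx := hεle.trans ((min_le_right _ _).trans (min_le_left _ _))
    have hεδu : ε ≤ δu :=
      hεle.trans ((min_le_right _ _).trans ((min_le_right _ _).trans (min_le_left _ _)))
    have hεδ₂ : ε ≤ δ₂ / (C₁ + 1) :=
      hεle.trans ((min_le_right _ _).trans ((min_le_right _ _).trans (min_le_right _ _)))
    have hεI : ε ∈ Set.Ioc (0:ℝ) τ := ⟨hε0, hετ⟩
    have hτε0 : (0:ℝ) ≤ τ - ε := sub_nonneg.2 hετ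
    -- step (ii): estimate of the initial value of the quotient
    have hB1 : ‖ε⁻¹ • (xe ε τ - x τ) - (f (x τ) v - f (x τ) (u τ))‖
        ≤ K₁ * C₀ * ε + 3 * K₁ * η := by
      have hzτ : xe ε τ - x τ = ∫ r in (τ - ε)..τ,
          (f (xe ε r) (perturb u τ v ε r) - f (x r) (u r)) :=
        (hP1 ε hεI).1 τ ⟨by linarith, le_rfl⟩
      have hsmul : ε⁻¹ • (xe ε τ - x τ) - (f (x τ) v - f (x τ) (u τ))
          = ε⁻¹ • ((xe ε τ - x τ) - ε • (f (x τ) v - f (x τ) (u τ))) := by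
        conv_rhs => rw [smul_sub, smul_smul, inv_mul_cancel₀ (ne_of_gt hε0), one_smul]
      have hconstint : (∫ _ in (τ - ε)..τ, (f (x τ) v - f (x τ) (u τ)))
          = ε • (f (x τ) v - f (x τ) (u τ)) := by
        rw [intervalIntegral.integral_const]
        congr 1
        ring
      have hzc : (xe ε τ - x τ) - ε • (f (x τ) v - f (x τ) (u τ))
          = ∫ r in (τ - ε)..τ, ((f (xe ε r) (perturb u τ v ε r) - f (x r) (u r))
              - (f (x τ) v - f (x τ) (u τ))) := by
        rw [intervalIntegral.integral_sub
          (hIntE ε hεI (τ - ε) τ ⟨hτε0, by linarith⟩ ⟨hτ0.le, hτ1.le⟩)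
          intervalIntegrable_const, ← hzτ, hconstint]
      have hbint : ‖∫ r in (τ - ε)..τ, ((f (xe ε r) (perturb u τ v ε r) - f (x r) (u r))
              - (f (x τ) v - f (x τ) (u τ)))‖
          ≤ (K₁ * (C₀ * ε + η) + K₁ * (η + η)) * |τ - (τ - ε)| := by
        apply intervalIntegral.norm_integral_le_of_norm_le_const
        intro r hr
        rw [Set.uIoc_of_le (by linarith : τ - ε ≤ τ)] at hr
        have hr01 : r ∈ Set.Icc (0:ℝ) 1 := ⟨by linarith [hr.1], by linarith [hr.2]⟩
        have hrτε : r ∈ Set.Icc (τ - ε) τ := ⟨hr.1.le, hr.2⟩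
        have hdist : dist r τ < ε := by
          rw [Real.dist_eq, abs_of_nonpos (by linarith [hr.2])]
          linarith [hr.1]
        have hxrτ : ‖x r - x τ‖ ≤ η := by
          have := hxm hr01 (lt_of_lt_of_le hdist hεδx)
          rw [dist_eq_norm] at this
          exact this.le
        have hurτ : ‖u r - u τ‖ ≤ η := by
          have := hum (Set.mem_Iic.2 hr.2) (lt_of_lt_of_le hdist hεδu)
          rw [dist_eq_norm] at this
          exact this.le
        rw [hup_in ε r hr.1 hr.2]
        have hsplit2 : (f (xe ε r) v - f (x r) (u r)) - (f (x τ) v - f (x τ) (u τ))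
            = (f (xe ε r) v - f (x τ) v) - (f (x r) (u r) - f (x τ) (u τ)) := by abel
        rw [hsplit2]
        refine (norm_sub_le _ _).trans ?_
        have hterm1 : ‖f (xe ε r) v - f (x τ) v‖ ≤ K₁ * (C₀ * ε + η) := by
          refine (hLipx (xe ε r) (x τ) v hv).trans ?_
          apply mul_le_mul_of_nonneg_left _ hK₁0
          calc ‖xe ε r - x τ‖ ≤ ‖xe ε r - x r‖ + ‖x r - x τ‖ := by
                have : xe ε r - x τ = (xe ε r - x r) + (x r - x τ) := by abel
                rw [this]; exact norm_add_le _ _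
            _ ≤ C₀ * ε + η := add_le_add ((hP1 ε hεI).2 r hrτε) hxrτ
        have hterm2 : ‖f (x r) (u r) - f (x τ) (u τ)‖ ≤ K₁ * (η + η) := by
          refine (hLip (x r) (x τ) (u r) (u τ) (hubd r hr01)
            (hubd τ ⟨hτ0.le, hτ1.le⟩)).trans ?_
          exact mul_le_mul_of_nonneg_left (add_le_add hxrτ hurτ) hK₁0
        exact add_le_add hterm1 hterm2
      rw [hsmul, hzc, norm_smul, Real.norm_eq_abs, abs_of_pos (inv_pos.2 hε0)]
      have habs : |τ - (τ - ε)| = ε := by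
        rw [abs_of_nonneg (by linarith)]
        ring
      rw [habs] at hbint
      calc ε⁻¹ * ‖∫ r in (τ - ε)..τ, ((f (xe ε r) (perturb u τ v ε r) - f (x r) (u r))
              - (f (x τ) v - f (x τ) (u τ)))‖
          ≤ ε⁻¹ * ((K₁ * (C₀ * ε + η) + K₁ * (η + η)) * ε) :=
            mul_le_mul_of_nonneg_left hbint (inv_nonneg.2 hε0.le)
        _ = K₁ * C₀ * ε + 3 * K₁ * η := by
            field_simp
            ring
    -- step (iii): Grönwall for the quotient
    have hδqc : ContinuousOn (fun s => ‖ε⁻¹ • (xe ε s - x s) - Ψ s‖) (Set.Icc τ 1) :=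
      (((((hxe_dat ε hεI).2.1.mono hsubτ1).sub (hxc.mono hsubτ1)).const_smul
        ε⁻¹).sub hΨcont.continuousOn).norm
    have hineq : ∀ r ∈ Set.Icc τ 1, ‖ε⁻¹ • (xe ε r - x r) - Ψ r‖
        ≤ ((K₁ * C₀ * ε + 3 * K₁ * η) + η * C₁)
          + K₁ * ∫ s in τ..r, ‖ε⁻¹ • (xe ε s - x s) - Ψ s‖ := by
      intro r hr
      have hr01 : r ∈ Set.Icc (0:ℝ) 1 := hsubτ1 hr
      have hτmem : τ ∈ Set.Icc (0:ℝ) 1 := ⟨hτ0.le, hτ1.le⟩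
      have hident : ε⁻¹ • (xe ε r - x r) - Ψ r
          = (ε⁻¹ • (xe ε τ - x τ) - (f (x τ) v - f (x τ) (u τ)))
            + ∫ s in τ..r, (ε⁻¹ • (f (xe ε s) (perturb u τ v ε s) - f (x s) (u s))
              - (A s) (Ψ s)) := by
        have hsm : IntervalIntegrable (fun s =>
            ε⁻¹ • (f (xe ε s) (perturb u τ v ε s) - f (x s) (u s)))
            MeasureTheory.volume τ r := (hIntE ε hεI τ r hτmem hr01).smul ε⁻¹
        rw [intervalIntegral.integral_sub hsm (hIntA Ψ hΨcont.continuousOn r hr),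
          intervalIntegral.integral_smul, (hP2 ε hεI).1 r hr, hΨeq r hr, smul_add]
        abel
      rw [hident]
      refine (norm_add_le _ _).trans ?_
      have hb : ‖∫ s in τ..r, (ε⁻¹ • (f (xe ε s) (perturb u τ v ε s) - f (x s) (u s))
            - (A s) (Ψ s))‖
          ≤ |∫ s in τ..r, (η * C₁ + K₁ * ‖ε⁻¹ • (xe ε s - x s) - Ψ s‖)| := by
        apply intervalIntegral.norm_integral_le_abs_of_norm_le
        · rw [Set.uIoc_of_le hr.1]
          filter_upwards [MeasureTheory.ae_restrict_mem measurableSet_Ioc] with s hs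
          have hs01 : s ∈ Set.Icc (0:ℝ) 1 := hsubτ1 ⟨hs.1.le, hs.2.trans hr.2⟩
          have hsτ1 : s ∈ Set.Icc τ 1 := ⟨hs.1.le, hs.2.trans hr.2⟩
          rw [hup_out2 ε s hs.1]
          have hdecomp : ε⁻¹ • (f (xe ε s) (u s) - f (x s) (u s)) - (A s) (Ψ s)
              = ε⁻¹ • ((f (xe ε s) (u s) - f (x s) (u s)) - (A s) (xe ε s - x s))
                + (A s) (ε⁻¹ • (xe ε s - x s) - Ψ s) := by
            simp only [_root_.map_sub, _root_.map_smul, smul_sub]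
            abel
          rw [hdecomp]
          refine (norm_add_le _ _).trans ?_
          have hzbd : ‖xe ε s - x s‖ ≤ C₁ * ε := (hP2 ε hεI).2 s hsτ1
          have hzsmall : ‖xe ε s - x s‖ ≤ δ₂ := by
            refine hzbd.trans ?_
            have h9 : C₁ * ε ≤ C₁ * (δ₂ / (C₁ + 1)) :=
              mul_le_mul_of_nonneg_left hεδ₂ hC₁0
            have h10 : C₁ * (δ₂ / (C₁ + 1)) = δ₂ * (C₁ / (C₁ + 1)) := by ring
            have h11 : C₁ / (C₁ + 1) ≤ 1 := by
              rw [div_le_one hC₁1]; linarith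
            calc C₁ * ε ≤ C₁ * (δ₂ / (C₁ + 1)) := h9
              _ = δ₂ * (C₁ / (C₁ + 1)) := h10
              _ ≤ δ₂ * 1 := mul_le_mul_of_nonneg_left h11 hδ₂.le
              _ = δ₂ := mul_one _
          have hterm1 : ‖ε⁻¹ • ((f (xe ε s) (u s) - f (x s) (u s))
              - (A s) (xe ε s - x s))‖ ≤ η * C₁ := by
            rw [norm_smul, Real.norm_eq_abs, abs_of_pos (inv_pos.2 hε0)]
            have htaylor : ‖(f (xe ε s) (u s) - f (x s) (u s))
                - (A s) (xe ε s - x s)‖ ≤ η * ‖xe ε s - x s‖ := by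
              have hre : xe ε s = x s + (xe ε s - x s) := by abel
              have := htay (x s) (u s) (xe ε s - x s) (hMx s hs01) (hubd s hs01) hzsmall
              rw [← hre] at this
              exact this
            calc ε⁻¹ * ‖(f (xe ε s) (u s) - f (x s) (u s)) - (A s) (xe ε s - x s)‖
                ≤ ε⁻¹ * (η * (C₁ * ε)) := by
                  apply mul_le_mul_of_nonneg_left _ (inv_nonneg.2 hε0.le)
                  exact htaylor.trans (mul_le_mul_of_nonneg_left hzbd hη.le)
              _ = η * C₁ := by field_simp
          have hterm2 : ‖(A s) (ε⁻¹ • (xe ε s - x s) - Ψ s)‖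
              ≤ K₁ * ‖ε⁻¹ • (xe ε s - x s) - Ψ s‖ :=
            ((A s).le_opNorm _).trans
              (mul_le_mul_of_nonneg_right (hAbd s hs01) (norm_nonneg _))
          exact add_le_add hterm1 hterm2
        · exact (continuous_const.continuousOn.add ((hδqc.mono (fun y hy =>
            ⟨hy.1, hy.2.trans hr.2⟩)).const_smul K₁)).intervalIntegrable_of_Icc hr.1
      refine (add_le_add hB1 hb).trans ?_
      have hnn : 0 ≤ ∫ s in τ..r, ‖ε⁻¹ • (xe ε s - x s) - Ψ s‖ :=
        intervalIntegral.integral_nonneg hr.1 (fun s _ => norm_nonneg _)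
      have hsplit : ∫ s in τ..r, (η * C₁ + K₁ * ‖ε⁻¹ • (xe ε s - x s) - Ψ s‖)
          = (r - τ) * (η * C₁) + K₁ * ∫ s in τ..r, ‖ε⁻¹ • (xe ε s - x s) - Ψ s‖ := by
        rw [intervalIntegral.integral_add intervalIntegrable_const
          (((hδqc.mono (fun y hy => ⟨hy.1, hy.2.trans hr.2⟩)).intervalIntegrable_of_Icc
            hr.1).const_mul K₁),
          intervalIntegral.integral_const, smul_eq_mul,
          intervalIntegral.integral_const_mul]
      have hηC₁ : (0:ℝ) ≤ η * C₁ := mul_nonneg hη.le hC₁0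
      rw [hsplit, abs_of_nonneg (add_nonneg (mul_nonneg
        (by linarith [hr.1] : (0:ℝ) ≤ r - τ) hηC₁) (mul_nonneg hK₁0 hnn))]
      have h12 : (r - τ) * (η * C₁) ≤ η * C₁ := by
        have h13 : r - τ ≤ 1 := by have := hr.2; linarith
        calc (r - τ) * (η * C₁) ≤ 1 * (η * C₁) :=
            mul_le_mul_of_nonneg_right h13 hηC₁
          _ = η * C₁ := one_mul _
      linarith
    have hgr := gronwall_aux (a := τ) (b := 1) hK₁0
      (by nlinarith [mul_nonneg (mul_nonneg hK₁0 hC₀0) hε0.le,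
        mul_nonneg hK₁0 hη.le, mul_nonneg hη.le hC₁0]) hδqc hineq
    refine (hgr t ht).trans ?_
    have h6 : K₁ * (t - τ) ≤ K₁ := by
      have : t - τ ≤ 1 := by have := ht.2; linarith
      calc K₁ * (t - τ) ≤ K₁ * 1 := mul_le_mul_of_nonneg_left this hK₁0
        _ = K₁ := mul_one _
    calc ((K₁ * C₀ * ε + 3 * K₁ * η) + η * C₁) * Real.exp (K₁ * (t - τ))
        ≤ ((K₁ * C₀ * ε + 3 * K₁ * η) + η * C₁) * Real.exp K₁ :=
          mul_le_mul_of_nonneg_left (Real.exp_le_exp.2 h6)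
            (by nlinarith [mul_nonneg (mul_nonneg hK₁0 hC₀0) hε0.le,
              mul_nonneg hK₁0 hη.le, mul_nonneg hη.le hC₁0])
      _ = (K₁ * C₀ * ε + 3 * K₁ * η + η * C₁) * Real.exp K₁ := by ring
  -- assemble the conclusion
  refine ⟨Ψ, ?_, hΨτ, hΨcont.continuousOn, ?_, ?_⟩
  · -- the limit statement
    intro t ht
    rw [Metric.tendsto_nhds]
    intro r hr
    have hEc : (0:ℝ) < Real.exp K₁ := Real.exp_pos _
    have hpos1 : (0:ℝ) < 3 * K₁ + C₁ + 1 := by linarith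
    have hpos2 : (0:ℝ) < K₁ * C₀ + 1 := by nlinarith
    set η : ℝ := r / (4 * (3 * K₁ + C₁ + 1) * Real.exp K₁) with hηdef
    have hηpos : 0 < η := div_pos hr (mul_pos (mul_pos (by norm_num) hpos1) hEc)
    obtain ⟨ε₀, hε₀pos, hε₀τ, hbound⟩ := hmain η hηpos
    set ε₂ : ℝ := r / (4 * (K₁ * C₀ + 1) * Real.exp K₁) with hε₂def
    have hε₂pos : 0 < ε₂ := div_pos hr (mul_pos (mul_pos (by norm_num) hpos2) hEc)
    have hmem : Set.Ioc (0:ℝ) (min ε₀ ε₂) ∈ 𝓝[>] (0:ℝ) :=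
      Ioc_mem_nhdsGT_of_mem ⟨le_rfl, lt_min hε₀pos hε₂pos⟩
    filter_upwards [hmem] with ε hε
    rw [dist_eq_norm]
    have hb := hbound ε hε.1 (hε.2.trans (min_le_left _ _)) t ht
    have hεε₂ : ε ≤ ε₂ := hε.2.trans (min_le_right _ _)
    have hne1 : (K₁ * C₀ + 1) ≠ 0 := ne_of_gt hpos2
    have hne2 : Real.exp K₁ ≠ 0 := ne_of_gt hEc
    have hne3 : (3 * K₁ + C₁ + 1) ≠ 0 := ne_of_gt hpos1
    have key1 : K₁ * C₀ * ε * Real.exp K₁ ≤ r / 4 := by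
      have e0 : (K₁ * C₀ + 1) * ε₂ * Real.exp K₁ = r / 4 := by
        rw [hε₂def]
        field_simp
      have e1 : K₁ * C₀ * ε * Real.exp K₁ ≤ (K₁ * C₀ + 1) * ε * Real.exp K₁ := by
        nlinarith [mul_nonneg hε.1.le hEc.le]
      have e2 : (K₁ * C₀ + 1) * ε * Real.exp K₁ ≤ (K₁ * C₀ + 1) * ε₂ * Real.exp K₁ := by
        nlinarith [mul_le_mul_of_nonneg_right hεε₂ (mul_pos hpos2 hEc).le,
          mul_pos hpos2 hEc]
      linarith
    have key2 : (3 * K₁ * η + η * C₁) * Real.exp K₁ ≤ r / 4 := by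
      have e0 : (3 * K₁ + C₁ + 1) * η * Real.exp K₁ = r / 4 := by
        rw [hηdef]
        field_simp
      nlinarith [mul_nonneg hηpos.le hEc.le]
    calc ‖ε⁻¹ • (xe ε t - x t) - Ψ t‖
        ≤ (K₁ * C₀ * ε + 3 * K₁ * η + η * C₁) * Real.exp K₁ := hb
      _ = K₁ * C₀ * ε * Real.exp K₁ + (3 * K₁ * η + η * C₁) * Real.exp K₁ := by ring
      _ ≤ r / 4 + r / 4 := add_le_add key1 key2
      _ < r := by linarith
  · -- the integral equation
    intro t ht
    rw [hΨτ]
    exact hΨeq t ht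
  · -- uniqueness
    intro Ψ' hΨ'c hΨ'τ hΨ'eq t ht
    have hdiffc : ContinuousOn (fun s => ‖Ψ' s - Ψ s‖) (Set.Icc τ 1) :=
      (hΨ'c.sub hΨcont.continuousOn).norm
    have hineq : ∀ r ∈ Set.Icc τ 1, ‖Ψ' r - Ψ r‖
        ≤ 0 + K₁ * ∫ s in τ..r, ‖Ψ' s - Ψ s‖ := by
      intro r hr
      have hident : Ψ' r - Ψ r = ∫ s in τ..r, ((A s) (Ψ' s) - (A s) (Ψ s)) := by
        rw [intervalIntegral.integral_sub (hIntA Ψ' hΨ'c r hr)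
          (hIntA Ψ hΨcont.continuousOn r hr)]
        rw [hΨ'eq r hr, hΨeq r hr, hΨ'τ]
        simp only [hA]
        abel
      rw [hident, zero_add]
      have hb : ‖∫ s in τ..r, ((A s) (Ψ' s) - (A s) (Ψ s))‖
          ≤ |∫ s in τ..r, K₁ * ‖Ψ' s - Ψ s‖| := by
        apply intervalIntegral.norm_integral_le_abs_of_norm_le
        · rw [Set.uIoc_of_le hr.1]
          filter_upwards [MeasureTheory.ae_restrict_mem measurableSet_Ioc] with s hs
          have hs01 : s ∈ Set.Icc (0:ℝ) 1 := hsubτ1 ⟨hs.1.le, hs.2.trans hr.2⟩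
          rw [← map_sub]
          exact ((A s).le_opNorm _).trans
            (mul_le_mul_of_nonneg_right (hAbd s hs01) (norm_nonneg _))
        · exact ((hdiffc.mono (fun y hy => ⟨hy.1, hy.2.trans
            hr.2⟩)).intervalIntegrable_of_Icc hr.1).const_mul K₁
      refine hb.trans ?_
      rw [intervalIntegral.integral_const_mul, abs_of_nonneg (mul_nonneg hK₁0
        (intervalIntegral.integral_nonneg hr.1 (fun s _ => norm_nonneg _)))]
    have hgr := gronwall_aux (a := τ) (b := 1) hK₁0 le_rfl hdiffc hineq
    have := hgr t ht
    rw [zero_mul] at this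
    exact sub_eq_zero.1 (norm_le_zero_iff.1 this)
end
end

section
/- Let u ∈ U, τ ∈ (0,1), v ∈ B(0,ρ_max), and let u^ε be the perturbed control equal to v on (τ−ε, τ] and to u elsewhere, with x₁ and x₁^ε the corresponding solutions on [0,1] of ẋ = f(x,·) starting at x₀. Then lim_{ε→0⁺} (1/ε) ∫_{τ−ε}^{τ} { c(x₁^ε(t), u^ε(t)) − c(x₁(t), u(t)) } dt = c(x₁(τ), v) − c(x₁(τ), u(τ)). -/
open Set MeasureTheory Filter Topology

noncomputable section

open scoped Classical
set_option maxHeartbeats 1000000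

/-- An integral form of Grönwall's inequality. -/
lemma gronwall_int {g : ℝ → ℝ} {K a b : ℝ} (hg : Continuous g) (hg0 : ∀ t, 0 ≤ g t)
    (hK : 0 < K) (h : ∀ t ∈ Icc (0:ℝ) b, g t ≤ a + K * ∫ s in (0:ℝ)..t, g s) :
    ∀ t ∈ Icc (0:ℝ) b, g t ≤ a * Real.exp (K * b) := by
  intro t ht
  have hb0 : (0:ℝ) ≤ b := le_trans ht.1 ht.2
  have ha0 : 0 ≤ a := le_trans (hg0 0) (by simpa using h 0 ⟨le_rfl, hb0⟩)
  set G : ℝ → ℝ := fun r => ∫ s in (0:ℝ)..r, g s with hGdef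
  have hG' : ∀ s, HasDerivAt G (g s) s := fun s =>
    (hg.integral_hasStrictDerivAt 0 s).hasDerivAt
  have hGc : ContinuousOn G (Icc 0 b) := fun s _ =>
    (hG' s).continuousAt.continuousWithinAt
  have hGnn : ∀ s ∈ Icc (0:ℝ) b, 0 ≤ G s := fun s hs =>
    intervalIntegral.integral_nonneg hs.1 fun r _ => hg0 r
  have key := norm_le_gronwallBound_of_norm_deriv_right_le (δ := 0) (K := K) (ε := a) hGc
    (fun s hs => (hG' s).hasDerivWithinAt)
    (by simp [hGdef])
    (fun s hs => by
      have h1 := h s (Ico_subset_Icc_self hs)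
      have h2 := hGnn s (Ico_subset_Icc_self hs)
      rw [Real.norm_eq_abs, Real.norm_eq_abs, abs_of_nonneg (hg0 s), abs_of_nonneg h2]
      linarith)
  have hGt := key t ht
  rw [gronwallBound_of_K_ne_0 hK.ne'] at hGt
  simp only [zero_mul, zero_add, sub_zero] at hGt
  have h3 : g t ≤ a + K * G t := h t ht
  have h4 : G t ≤ a / K * (Real.exp (K * t) - 1) :=
    le_trans (le_abs_self _) hGt
  have h5 : K * (a / K * (Real.exp (K * t) - 1)) = a * (Real.exp (K * t) - 1) := by
    field_simp
  have h6 : Real.exp (K * t) ≤ Real.exp (K * b) :=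
    Real.exp_le_exp.2 (mul_le_mul_of_nonneg_left ht.2 hK.le)
  have h7 : g t ≤ a * Real.exp (K * t) := by nlinarith
  nlinarith [Real.exp_pos (K * t)]

/-- Integrability of a continuous function of a continuous state and a measurable bounded
control. -/
lemma integrableOn_comp_ctrl {nx m : ℕ} {E : Type*} [NormedAddCommGroup E]
    (F : EucSp nx × EucSp m → E) (hF : Continuous F)
    {z : ℝ → EucSp nx} (hz : ContinuousOn z (Icc 0 1))
    {w : ℝ → EucSp m} (hw : AEStronglyMeasurable w (volume.restrict (Icc 0 1)))
    {ρ : ℝ} (hwb : ∀ t ∈ Icc (0:ℝ) 1, ‖w t‖ ≤ ρ) :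
    IntegrableOn (fun s => F (z s, w s)) (Icc 0 1) := by
  obtain ⟨M, hM⟩ := ((isCompact_Icc.image_of_continuousOn hz).prod
    (isCompact_closedBall (0 : EucSp m) ρ)).exists_bound_of_continuousOn hF.continuousOn
  have hmeas : AEStronglyMeasurable (fun s => F (z s, w s)) (volume.restrict (Icc 0 1)) :=
    hF.comp_aestronglyMeasurable ((hz.aestronglyMeasurable measurableSet_Icc).prodMk hw)
  exact (integrable_const M).mono' hmeas
    ((ae_restrict_iff' measurableSet_Icc).2 (ae_of_all _ fun s hs =>
      hM _ (Set.mk_mem_prod (mem_image_of_mem _ hs) (mem_closedBall_zero_iff.2 (hwb s hs)))))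

/-- Lemma 17: the averaged difference of the instantaneous cost over the
perturbation interval converges, as `ε → 0⁺`, to `c(x₁(τ), v) − c(x₁(τ), u(τ))`. -/
theorem averaged_cost_difference_limit {nx m : ℕ} (T : ℕ) (hT : 1 ≤ T)
    (ρmax K₁ : ℝ) (hK₁ : 1 ≤ K₁)
    (f : EucSp nx → EucSp m → EucSp nx)
    (hf : ContDiff ℝ 1 fun p : EucSp nx × EucSp m => f p.1 p.2)
    (hLip : ∀ (x' x'' : EucSp nx) (u' u'' : EucSp m), ‖u'‖ ≤ ρmax → ‖u''‖ ≤ ρmax →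
      ‖f x' u' - f x'' u''‖ ≤ K₁ * (‖x' - x''‖ + ‖u' - u''‖))
    (c : EucSp nx → EucSp m → ℝ)
    (hcc : Continuous fun p : EucSp nx × EucSp m => c p.1 p.2)
    (hcx : ∀ uu : EucSp m, ContDiff ℝ 1 fun z => c z uu)
    (u : ℝ → EucSp m) (hu : AdmissibleCtrl (T : ℝ) ρmax u)
    (τ : ℝ) (hτ : τ ∈ Set.Ioo (0 : ℝ) 1) (v : EucSp m) (hv : ‖v‖ ≤ ρmax)
    (huτ : ContinuousWithinAt u (Set.Iic τ) τ)
    (x₀ : EucSp nx) (x : ℝ → EucSp nx) (xe : ℝ → ℝ → EucSp nx)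
    (hxnom : x 0 = x₀ ∧ IsSolOn f u 0 1 x)
    (hxe : ∀ ε ∈ Set.Icc (0 : ℝ) τ,
      xe ε 0 = x₀ ∧ IsSolOn f (perturb u τ v ε) 0 1 (xe ε)) :
    Tendsto
      (fun ε : ℝ => ε⁻¹ *
        ∫ t in (τ - ε)..τ, (c (xe ε t) (perturb u τ v ε t) - c (x t) (u t)))
      (𝓝[>] 0) (𝓝 (c (x τ) v - c (x τ) (u τ))) := by
  obtain ⟨hτ0, hτ1⟩ := hτ
  have hρ0 : 0 ≤ ρmax := le_trans (norm_nonneg v) hv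
  have hK0 : 0 < K₁ := lt_of_lt_of_le one_pos hK₁
  have hT1 : (1 : ℝ) ≤ (T : ℝ) := by exact_mod_cast hT
  have hsub01T : Icc (0:ℝ) 1 ⊆ Icc (0:ℝ) (T:ℝ) := Icc_subset_Icc le_rfl hT1
  have hx_cont : ContinuousOn x (Icc 0 1) := hxnom.2.1
  -- measurability of u on [0,1]
  obtain ⟨D, hD⟩ := hu.1
  have hDnull : volume (↑D : Set ℝ) = 0 := (D.countable_toSet).measure_zero _
  have hu_meas : AEStronglyMeasurable u (volume.restrict (Icc 0 1)) := by
    have hcont : ContinuousOn u (Icc 0 1 \ ↑D) := fun t ht =>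
      (hD t (hsub01T ht.1) ht.2).mono (Subset.trans diff_subset hsub01T)
    have hmeasD : MeasurableSet (Icc (0:ℝ) 1 \ ↑D) :=
      measurableSet_Icc.diff (D.finite_toSet.measurableSet)
    have h1 : AEStronglyMeasurable u (volume.restrict (Icc 0 1 \ ↑D)) :=
      hcont.aestronglyMeasurable hmeasD
    have hD0 : volume (Icc (0:ℝ) 1 ∩ ↑D) = 0 :=
      measure_mono_null inter_subset_right hDnull
    have heq : (Icc (0:ℝ) 1 \ ↑D : Set ℝ) =ᵐ[volume] Icc (0:ℝ) 1 :=
      diff_ae_eq_self.2 hD0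
    rwa [Measure.restrict_congr_set heq] at h1
  -- measurability and boundedness of perturbed controls
  have hw_meas : ∀ ε : ℝ, AEStronglyMeasurable (perturb u τ v ε)
      (volume.restrict (Icc 0 1)) := by
    intro ε
    have heq : perturb u τ v ε = fun t => u t +
        (Ioc (τ - ε) τ).indicator (fun t => v - u t) t := by
      funext t
      by_cases h : τ - ε < t ∧ t ≤ τ
      · simp [perturb, h, Set.indicator, Set.mem_Ioc]
      · simp [perturb, h, Set.indicator, Set.mem_Ioc]
    rw [heq]
    exact hu_meas.add ((aestronglyMeasurable_const.sub hu_meas).indicator measurableSet_Ioc)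
  have hub : ∀ t ∈ Icc (0:ℝ) 1, ‖u t‖ ≤ ρmax := fun t ht => hu.2 t (hsub01T ht)
  have hwb : ∀ ε : ℝ, ∀ t ∈ Icc (0:ℝ) 1, ‖perturb u τ v ε t‖ ≤ ρmax := by
    intro ε t ht
    unfold perturb
    split
    · exact hv
    · exact hub t ht
  set C : ℝ := 2 * K₁ * ρmax * Real.exp K₁ with hCdef
  have hC0 : 0 ≤ C := by positivity
  -- the key Grönwall estimate
  have key : ∀ ε ∈ Ioc (0:ℝ) τ, ∀ t ∈ Icc (0:ℝ) 1, ‖xe ε t - x t‖ ≤ C * ε := by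
    intro ε hε
    set w : ℝ → EucSp m := perturb u τ v ε with hwdef
    obtain ⟨hxe0, hxec, hxeeq⟩ :
        xe ε 0 = x₀ ∧ ContinuousOn (xe ε) (Icc 0 1) ∧
          ∀ t ∈ Icc (0:ℝ) 1, xe ε t = xe ε 0 + ∫ s in (0:ℝ)..t, f (xe ε s) (w s) := by
      obtain ⟨h1, h2, h3⟩ := hxe ε ⟨hε.1.le, hε.2⟩
      exact ⟨h1, h2, h3⟩
    have hxeq : ∀ t ∈ Icc (0:ℝ) 1, x t = x 0 + ∫ s in (0:ℝ)..t, f (x s) (u s) :=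
      hxnom.2.2
    -- integrability
    have hFint : IntegrableOn (fun s => f (x s) (u s)) (Icc 0 1) :=
      integrableOn_comp_ctrl (fun p => f p.1 p.2) hf.continuous hx_cont hu_meas hub
    have hFεint : IntegrableOn (fun s => f (xe ε s) (w s)) (Icc 0 1) :=
      integrableOn_comp_ctrl (fun p => f p.1 p.2) hf.continuous hxec (hw_meas ε) (hwb ε)
    have hII : ∀ t ∈ Icc (0:ℝ) 1, IntervalIntegrable (fun s => f (x s) (u s)) volume 0 t :=
      fun t ht => (hFint.mono_set (by rw [uIcc_of_le ht.1]; exact Icc_subset_Icc le_rfl ht.2)).intervalIntegrable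
    have hIIε : ∀ t ∈ Icc (0:ℝ) 1, IntervalIntegrable (fun s => f (xe ε s) (w s)) volume 0 t :=
      fun t ht => (hFεint.mono_set (by rw [uIcc_of_le ht.1]; exact Icc_subset_Icc le_rfl ht.2)).intervalIntegrable
    -- difference formula
    have hdiff : ∀ t ∈ Icc (0:ℝ) 1,
        xe ε t - x t = ∫ s in (0:ℝ)..t, (f (xe ε s) (w s) - f (x s) (u s)) := by
      intro t ht
      rw [hxeeq t ht, hxeq t ht, hxe0, hxnom.1,
        intervalIntegral.integral_sub (hIIε t ht) (hII t ht)]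
      abel
    -- clamp
    set cl : ℝ → ℝ := fun s => max 0 (min s 1) with hcldef
    have hcl_cont : Continuous cl := continuous_const.max (continuous_id.min continuous_const)
    have hcl_mem : ∀ s, cl s ∈ Icc (0:ℝ) 1 := fun s =>
      ⟨le_max_left _ _, max_le zero_le_one (min_le_right _ _)⟩
    have hcl_id : ∀ s ∈ Icc (0:ℝ) 1, cl s = s := fun s hs => by
      simp only [hcldef]; rw [min_eq_left hs.2, max_eq_right hs.1]
    set g : ℝ → ℝ := fun s => ‖xe ε (cl s) - x (cl s)‖ with hgdef
    have hg_cont : Continuous g := by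
      apply Continuous.norm
      exact (hxec.comp_continuous hcl_cont hcl_mem).sub
        (hx_cont.comp_continuous hcl_cont hcl_mem)
    have hg0 : ∀ s, 0 ≤ g s := fun s => norm_nonneg _
    -- integrability of ‖w - u‖
    have hwu_meas : AEStronglyMeasurable (fun s => ‖w s - u s‖)
        (volume.restrict (Icc 0 1)) := ((hw_meas ε).sub hu_meas).norm
    have hwu_int : IntegrableOn (fun s => ‖w s - u s‖) (Icc 0 1) := by
      refine (integrable_const (2 * ρmax)).mono' hwu_meas
        ((ae_restrict_iff' measurableSet_Icc).2 (ae_of_all _ fun s hs => ?_))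
      rw [Real.norm_eq_abs, abs_of_nonneg (norm_nonneg _)]
      calc ‖w s - u s‖ ≤ ‖w s‖ + ‖u s‖ := norm_sub_le _ _
        _ ≤ ρmax + ρmax := add_le_add (hwb ε s hs) (hub s hs)
        _ = 2 * ρmax := by ring
    have hwuII : ∀ t ∈ Icc (0:ℝ) 1, IntervalIntegrable (fun s => ‖w s - u s‖) volume 0 t :=
      fun t ht => (hwu_int.mono_set (by rw [uIcc_of_le ht.1]; exact Icc_subset_Icc le_rfl ht.2)).intervalIntegrable
    -- the control perturbation is small in L¹
    have hctrl : ∀ t ∈ Icc (0:ℝ) 1,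
        (∫ s in (0:ℝ)..t, ‖w s - u s‖) ≤ 2 * ρmax * ε := by
      intro t ht
      have h1 : (∫ s in (0:ℝ)..t, ‖w s - u s‖) ≤ ∫ s in (0:ℝ)..1, ‖w s - u s‖ := by
        refine intervalIntegral.integral_mono_interval le_rfl ht.1 ht.2 ?_ (hwuII 1 ⟨zero_le_one, le_rfl⟩)
        exact ae_of_all _ fun s => norm_nonneg _
      have hIocsub : Ioc (τ - ε) τ ⊆ Ioc (0:ℝ) 1 :=
        Ioc_subset_Ioc (by linarith [hε.2]) hτ1.le
      have hindII : IntervalIntegrable ((Ioc (τ - ε) τ).indicator fun _ => 2 * ρmax)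
          volume 0 1 := by
        have hc : IntegrableOn (fun _ : ℝ => 2 * ρmax) (Icc (0:ℝ) 1) :=
          integrableOn_const measure_Icc_lt_top.ne
        have h5 : IntegrableOn ((Ioc (τ - ε) τ).indicator fun _ : ℝ => 2 * ρmax)
            (Icc (0:ℝ) 1) := hc.indicator measurableSet_Ioc
        exact (h5.mono_set (by rw [uIcc_of_le zero_le_one] : uIcc (0:ℝ) 1 ⊆ Icc 0 1)).intervalIntegrable
      have h2 : (∫ s in (0:ℝ)..1, ‖w s - u s‖) ≤
          ∫ s in (0:ℝ)..1, (Ioc (τ - ε) τ).indicator (fun _ => 2 * ρmax) s := by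
        refine intervalIntegral.integral_mono_on zero_le_one (hwuII 1 ⟨zero_le_one, le_rfl⟩)
          hindII (fun s hs => ?_)
        by_cases h : s ∈ Ioc (τ - ε) τ
        · have hws : w s = v := by
            simp only [hwdef, perturb, if_pos (show τ - ε < s ∧ s ≤ τ from h)]
          rw [Set.indicator_of_mem h, hws]
          calc ‖v - u s‖ ≤ ‖v‖ + ‖u s‖ := norm_sub_le _ _
            _ ≤ ρmax + ρmax := add_le_add hv (hub s hs)
            _ = 2 * ρmax := by ring
        · have hws : w s = u s := by
            simp only [hwdef, perturb]
            rw [if_neg]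
            simpa [Set.mem_Ioc] using h
          rw [Set.indicator_of_notMem h, hws]
          simp
      have h3 : (∫ s in (0:ℝ)..1, (Ioc (τ - ε) τ).indicator (fun _ => 2 * ρmax) s)
          = 2 * ρmax * ε := by
        rw [intervalIntegral.integral_of_le zero_le_one,
          MeasureTheory.setIntegral_indicator measurableSet_Ioc,
          Set.inter_eq_right.2 hIocsub, setIntegral_const, measureReal_def, Real.volume_Ioc,
          ENNReal.toReal_ofReal (by linarith [hε.1] : (0:ℝ) ≤ τ - (τ - ε))]
        simp only [smul_eq_mul]
        ring
      linarith
    -- Grönwall hypothesis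
    have hgron : ∀ t ∈ Icc (0:ℝ) 1,
        g t ≤ K₁ * (2 * ρmax * ε) + K₁ * ∫ s in (0:ℝ)..t, g s := by
      intro t ht
      have hclt : cl t = t := hcl_id t ht
      have h1 : g t = ‖∫ s in (0:ℝ)..t, (f (xe ε s) (w s) - f (x s) (u s))‖ := by
        simp only [hgdef, hclt, hdiff t ht]
      have h2 : ‖∫ s in (0:ℝ)..t, (f (xe ε s) (w s) - f (x s) (u s))‖ ≤
          ∫ s in (0:ℝ)..t, ‖f (xe ε s) (w s) - f (x s) (u s)‖ :=
        intervalIntegral.norm_integral_le_integral_norm ht.1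
      have h3 : (∫ s in (0:ℝ)..t, ‖f (xe ε s) (w s) - f (x s) (u s)‖) ≤
          ∫ s in (0:ℝ)..t, (K₁ * g s + K₁ * ‖w s - u s‖) := by
        refine intervalIntegral.integral_mono_on ht.1
          (((hIIε t ht).sub (hII t ht)).norm) ?_ (fun s hs => ?_)
        · exact ((hg_cont.intervalIntegrable 0 t).const_mul K₁).add
            ((hwuII t ht).const_mul K₁)
        · have hs1 : s ∈ Icc (0:ℝ) 1 := ⟨hs.1, le_trans hs.2 ht.2⟩
          have hcls : cl s = s := hcl_id s hs1
          have := hLip (xe ε s) (x s) (w s) (u s) (hwb ε s hs1) (hub s hs1)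
          simp only [hgdef, hcls]
          linarith
      have h4 : (∫ s in (0:ℝ)..t, (K₁ * g s + K₁ * ‖w s - u s‖))
          = K₁ * (∫ s in (0:ℝ)..t, g s) + K₁ * ∫ s in (0:ℝ)..t, ‖w s - u s‖ := by
        rw [intervalIntegral.integral_add ((hg_cont.intervalIntegrable 0 t).const_mul K₁)
          ((hwuII t ht).const_mul K₁), intervalIntegral.integral_const_mul,
          intervalIntegral.integral_const_mul]
      have h5 : K₁ * (∫ s in (0:ℝ)..t, ‖w s - u s‖) ≤ K₁ * (2 * ρmax * ε) :=
        mul_le_mul_of_nonneg_left (hctrl t ht) hK0.le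
      linarith
    -- apply Grönwall
    have hfinal := gronwall_int hg_cont hg0 hK0 hgron
    intro t ht
    have := hfinal t ht
    rw [hgdef] at this
    simp only at this
    rw [hcl_id t ht] at this
    calc ‖xe ε t - x t‖ ≤ K₁ * (2 * ρmax * ε) * Real.exp (K₁ * 1) := this
      _ = C * ε := by rw [hCdef]; ring
  -- now the limit
  rw [Metric.tendsto_nhdsWithin_nhds]
  intro δ hδ
  -- continuity of t ↦ c (x t) (u t) within Iic τ at τ
  have hIccmem : Icc (0:ℝ) 1 ∈ 𝓝[Iic τ] τ :=
    mem_nhdsWithin.2 ⟨Ioi 0, isOpen_Ioi, hτ0, fun t ht => ⟨ht.1.le, le_trans ht.2 hτ1.le⟩⟩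
  have hxτ : ContinuousWithinAt x (Iic τ) τ :=
    (hx_cont τ ⟨hτ0.le, hτ1.le⟩).mono_of_mem_nhdsWithin hIccmem
  have hcont1 : ContinuousWithinAt (fun t => c (x t) (u t)) (Iic τ) τ :=
    (hcc.continuousAt.comp_continuousWithinAt (hxτ.prodMk huτ))
  obtain ⟨η₁, hη₁0, hη₁⟩ := Metric.continuousWithinAt_iff.1 hcont1 (δ/4) (by linarith)
  -- continuity of z ↦ c z v at x τ
  have hcv : ContinuousAt (fun z => c z v) (x τ) :=
    (hcc.comp (continuous_id.prodMk continuous_const)).continuousAt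
  obtain ⟨r, hr0, hr⟩ := Metric.continuousAt_iff.1 hcv (δ/4) (by linarith)
  -- continuity of x within Iic τ at τ
  obtain ⟨η₂, hη₂0, hη₂⟩ := Metric.continuousWithinAt_iff.1 hxτ (r/2) (by linarith)
  refine ⟨min (min η₁ η₂) (min τ (r / (2 * (C + 1)))), by positivity, fun ε hε hεd => ?_⟩
  have hε0 : 0 < ε := hε
  rw [Real.dist_eq, sub_zero, abs_of_pos hε0] at hεd
  have hετ : ε < τ := lt_of_lt_of_le hεd (le_trans (min_le_right _ _) (min_le_left _ _))
  have hεη₁ : ε < η₁ := lt_of_lt_of_le hεd (le_trans (min_le_left _ _) (min_le_left _ _))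
  have hεη₂ : ε < η₂ := lt_of_lt_of_le hεd (le_trans (min_le_left _ _) (min_le_right _ _))
  have hεr : ε < r / (2 * (C + 1)) :=
    lt_of_lt_of_le hεd (le_trans (min_le_right _ _) (min_le_right _ _))
  have hIocsub : Ioc (τ - ε) τ ⊆ Icc (0:ℝ) 1 := fun s hs =>
    ⟨le_of_lt (lt_of_le_of_lt (by linarith) hs.1), le_trans hs.2 hτ1.le⟩
  -- integrability of the integrand
  have hxec : ContinuousOn (xe ε) (Icc 0 1) := (hxe ε ⟨hε0.le, hετ.le⟩).2.1
  have hint1 : IntegrableOn (fun t => c (xe ε t) (perturb u τ v ε t)) (Icc 0 1) :=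
    integrableOn_comp_ctrl (fun p => c p.1 p.2) hcc hxec (hw_meas ε) (hwb ε)
  have hint2 : IntegrableOn (fun t => c (x t) (u t)) (Icc 0 1) :=
    integrableOn_comp_ctrl (fun p => c p.1 p.2) hcc hx_cont hu_meas hub
  have hτε : τ - ε ≤ τ := by linarith
  have hIcc_sub : Icc (τ - ε) τ ⊆ Icc (0:ℝ) 1 := fun s hs =>
    ⟨by linarith [hs.1], le_trans hs.2 hτ1.le⟩
  have hgint : IntervalIntegrable
      (fun t => c (xe ε t) (perturb u τ v ε t) - c (x t) (u t)) volume (τ - ε) τ :=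
    ((hint1.mono_set (by rw [uIcc_of_le hτε]; exact hIcc_sub)).intervalIntegrable).sub
      ((hint2.mono_set (by rw [uIcc_of_le hτε]; exact hIcc_sub)).intervalIntegrable)
  set L : ℝ := c (x τ) v - c (x τ) (u τ) with hLdef
  -- pointwise bound on the perturbation interval
  have hbound : ∀ t ∈ Set.uIoc (τ - ε) τ,
      ‖(c (xe ε t) (perturb u τ v ε t) - c (x t) (u t)) - L‖ ≤ δ/2 := by
    rw [uIoc_of_le hτε]
    intro t ht
    have ht1 : t ∈ Icc (0:ℝ) 1 := hIocsub ht
    have htτ : t ∈ Iic τ := ht.2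
    have hdist : dist t τ < ε := by
      rw [Real.dist_eq, abs_of_nonpos (by linarith [ht.2])]
      linarith [ht.1]
    have hperturb : perturb u τ v ε t = v := by
      simp only [perturb, if_pos (show τ - ε < t ∧ t ≤ τ from ⟨ht.1, ht.2⟩)]
    -- bound on ‖xe ε t - x τ‖
    have h1 : ‖xe ε t - x t‖ ≤ C * ε := key ε ⟨hε0, hετ.le⟩ t ht1
    have h2 : dist (x t) (x τ) < r/2 := hη₂ htτ (lt_trans hdist hεη₂)
    have h3 : dist (xe ε t) (x τ) < r := by
      have hCε : C * ε < r/2 := by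
        have h2C : (0:ℝ) < 2 * (C + 1) := by positivity
        have h2 : ε * (2 * (C + 1)) < r := (lt_div_iff₀ h2C).1 hεr
        nlinarith
      calc dist (xe ε t) (x τ) ≤ dist (xe ε t) (x t) + dist (x t) (x τ) := dist_triangle _ _ _
        _ = ‖xe ε t - x t‖ + dist (x t) (x τ) := by rw [dist_eq_norm]
        _ < C * ε + r/2 := by linarith
        _ < r := by linarith
    have h4 : dist (c (xe ε t) v) (c (x τ) v) < δ/4 := hr h3
    have h5 : dist (c (x t) (u t)) (c (x τ) (u τ)) < δ/4 := hη₁ htτ (lt_trans hdist hεη₁)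
    rw [hperturb, Real.norm_eq_abs, hLdef]
    rw [Real.dist_eq] at h4 h5
    have := abs_sub_abs_le_abs_sub (c (xe ε t) v - c (x τ) v) (c (x t) (u t) - c (x τ) (u τ))
    calc |c (xe ε t) v - c (x t) (u t) - (c (x τ) v - c (x τ) (u τ))|
        = |(c (xe ε t) v - c (x τ) v) - (c (x t) (u t) - c (x τ) (u τ))| := by ring_nf
      _ ≤ |c (xe ε t) v - c (x τ) v| + |c (x t) (u t) - c (x τ) (u τ)| := abs_sub _ _
      _ ≤ δ/4 + δ/4 := add_le_add h4.le h5.le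
      _ = δ/2 := by ring
  -- conclude
  have hsplit : (∫ t in (τ - ε)..τ,
      ((c (xe ε t) (perturb u τ v ε t) - c (x t) (u t)) - L))
      = (∫ t in (τ - ε)..τ, (c (xe ε t) (perturb u τ v ε t) - c (x t) (u t))) - ε * L := by
    rw [intervalIntegral.integral_sub hgint intervalIntegrable_const,
      intervalIntegral.integral_const]
    have : τ - (τ - ε) = ε := by ring
    rw [this, smul_eq_mul]
  have hnorm : ‖(∫ t in (τ - ε)..τ, (c (xe ε t) (perturb u τ v ε t) - c (x t) (u t))) - ε * L‖
      ≤ δ/2 * ε := by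
    rw [← hsplit]
    have := intervalIntegral.norm_integral_le_of_norm_le_const hbound
    calc ‖∫ t in (τ - ε)..τ, ((c (xe ε t) (perturb u τ v ε t) - c (x t) (u t)) - L)‖
        ≤ δ/2 * |τ - (τ - ε)| := this
      _ = δ/2 * ε := by rw [show τ - (τ - ε) = ε by ring, abs_of_pos hε0]
  rw [Real.dist_eq]
  have hεne : ε ≠ 0 := hε0.ne'
  have heq : ε⁻¹ * (∫ t in (τ - ε)..τ, (c (xe ε t) (perturb u τ v ε t) - c (x t) (u t))) - L
      = ε⁻¹ * ((∫ t in (τ - ε)..τ, (c (xe ε t) (perturb u τ v ε t) - c (x t) (u t))) - ε * L) := by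
    field_simp
  rw [heq, abs_mul, abs_of_pos (inv_pos.2 hε0)]
  rw [Real.norm_eq_abs] at hnorm
  calc ε⁻¹ * |(∫ t in (τ - ε)..τ, (c (xe ε t) (perturb u τ v ε t) - c (x t) (u t))) - ε * L|
      ≤ ε⁻¹ * (δ/2 * ε) := mul_le_mul_of_nonneg_left hnorm (inv_pos.2 hε0).le
    _ = δ/2 := by field_simp
    _ < δ := by linarith
end
end
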